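/- arXiv:1101.5282 — 4 statements merged into one kernel-verified Lean document; each statement's English description precedes it below -/
import Mathlib

section
/- Let L be a positive continuous uniformly integrable martingale on [0,T] with L_0 = 1, and let max L_T denote its running supremum over [0,T]. Then E[max L_T] - 1 = E[L_T ln(max L_T)], and consequently E[max L_T] - 1 ≥ E[L_T ln(L_T)]. -/
open MeasureTheory Filter Set
open scoped Topology

section Aux

variable {a b : ℝ}

lemma aux_bddAbove_range_Icc {f : ℝ → ℝ} (hf : Continuous f) :
    BddAbove (Set.range fun u : Icc a b => f u) := by
  rw [← Set.image_eq_range]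
  exact (isCompact_Icc.image hf).bddAbove

lemma aux_le_ciSup_Icc {f : ℝ → ℝ} (hf : Continuous f) {s : ℝ} (hs : s ∈ Icc a b) :
    f s ≤ ⨆ u : Icc a b, f u :=
  le_ciSup (aux_bddAbove_range_Icc hf) ⟨s, hs⟩

lemma aux_ciSup_Icc_exists {f : ℝ → ℝ} (hf : Continuous f) (hab : a ≤ b) :
    ∃ s ∈ Icc a b, (⨆ u : Icc a b, f u) = f s := by
  haveI : Nonempty (Icc a b) := Set.nonempty_Icc_subtype hab
  obtain ⟨s, hs, hmax⟩ := isCompact_Icc.exists_isMaxOn (Set.nonempty_Icc.2 hab) hf.continuousOn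
  refine ⟨s, hs, le_antisymm (ciSup_le fun u => hmax u.2) (aux_le_ciSup_Icc hf hs)⟩

lemma aux_le_ciSup_Icc_iff {f : ℝ → ℝ} (hf : Continuous f) (hab : a ≤ b) (x : ℝ) :
    x ≤ (⨆ u : Icc a b, f u) ↔ ∃ s ∈ Icc a b, x ≤ f s := by
  constructor
  · intro hx
    obtain ⟨s, hs, heq⟩ := aux_ciSup_Icc_exists hf hab
    exact ⟨s, hs, heq ▸ hx⟩
  · rintro ⟨s, hs, hxs⟩
    exact hxs.trans (aux_le_ciSup_Icc hf hs)

lemma aux_measurable_ciSup_Icc {Ω : Type*} {mΩ : MeasurableSpace Ω} (f : ℝ → Ω → ℝ)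
    (hc : ∀ ω, Continuous fun t => f t ω) (hab : a ≤ b)
    (hm : ∀ s ∈ Icc a b, Measurable[mΩ] (f s)) :
    Measurable[mΩ] fun ω => ⨆ u : Icc a b, f u ω := by
  haveI : Nonempty (Icc a b) := Set.nonempty_Icc_subtype hab
  obtain ⟨D, hDc, hDd⟩ := TopologicalSpace.exists_countable_dense (Icc a b)
  haveI : Nonempty D := hDd.nonempty.to_subtype
  haveI := hDc.to_subtype
  have hbdd : ∀ ω, BddAbove (Set.range fun u : Icc a b => f u ω) :=
    fun ω => aux_bddAbove_range_Icc (hc ω)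
  have hkey : ∀ ω, (⨆ u : Icc a b, f u ω) = ⨆ d : D, f d.1 ω := by
    intro ω
    apply le_antisymm
    · refine ciSup_le fun u => ?_
      obtain ⟨v, hvD, hvlim⟩ := mem_closure_iff_seq_limit.mp (hDd u)
      have hcont' : Continuous fun w : Icc a b => f w ω :=
        (hc ω).comp continuous_subtype_val
      refine le_of_tendsto ((hcont'.continuousAt).tendsto.comp hvlim) ?_
      refine Eventually.of_forall fun n => ?_
      have hsub : (Set.range fun d : D => f d.1 ω) ⊆ Set.range fun u : Icc a b => f u ω := by
        rintro _ ⟨d, rfl⟩; exact ⟨d.1, rfl⟩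
      exact le_ciSup ((hbdd ω).mono hsub) (⟨v n, hvD n⟩ : D)
    · exact ciSup_le fun d => le_ciSup (hbdd ω) d.1
  simp_rw [hkey]
  exact Measurable.iSup fun d => hm d.1.1 d.1.2

end Aux

section Key

/-- Doob's maximal equality: for `x > 1`,
`∫_{S ≥ x} L_T dμ = x * μ {S ≥ x}`. -/
lemma aux_key_identity
    {Ω : Type*} {m0 : MeasurableSpace Ω} {μ : Measure Ω} [IsProbabilityMeasure μ]
    (ℱ : Filtration ℝ m0) (L : ℝ → Ω → ℝ) (T : ℝ) (hT : 0 ≤ T)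
    (hmart : Martingale L ℱ μ)
    (hcont : ∀ ω, Continuous fun t => L t ω)
    (hpos : ∀ t ω, 0 < L t ω)
    (h0 : ∀ ω, L 0 ω = 1)
    (S : Ω → ℝ) (hS : ∀ ω, S ω = ⨆ u : Icc (0:ℝ) T, L (u : ℝ) ω)
    (hSint : Integrable S μ)
    (x : ℝ) (hx : 1 < x) :
    ∫ ω in {ω | x ≤ S ω}, L T ω ∂μ = x * (μ {ω | x ≤ S ω}).toReal := by
  have hLmeas : ∀ s, Measurable (L s) :=
    fun s => ((hmart.stronglyAdapted s).measurable).mono (ℱ.le s) le_rfl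
  have hprog : ProgMeasurable ℱ L := hmart.stronglyAdapted.progMeasurable_of_continuous hcont
  have hSmeas : Measurable S := by
    have : S = fun ω => ⨆ u : Icc (0:ℝ) T, L (u : ℝ) ω := funext hS
    rw [this]
    exact aux_measurable_ciSup_Icc L hcont hT fun s _ => hLmeas s
  have hxS : ∀ ω, x ≤ S ω ↔ ∃ s ∈ Icc (0:ℝ) T, x ≤ L s ω := by
    intro ω; rw [hS ω]; exact aux_le_ciSup_Icc_iff (hcont ω) hT x
  -- the hitting time
  set U : Ω → Set ℝ := fun ω => (Icc 0 T ∩ {s | x ≤ L s ω}) ∪ {T} with hU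
  set τ : Ω → ℝ := fun ω => sInf (U ω) with hτ
  have hUclosed : ∀ ω, IsClosed (U ω) := fun ω =>
    (isClosed_Icc.inter (isClosed_le continuous_const (hcont ω))).union isClosed_singleton
  have hUne : ∀ ω, (U ω).Nonempty := fun ω => ⟨T, Or.inr rfl⟩
  have hUsub : ∀ ω, U ω ⊆ Icc 0 T := fun ω =>
    union_subset inter_subset_left (by simp [singleton_subset_iff, hT])
  have hUbdd : ∀ ω, BddBelow (U ω) := fun ω => ⟨0, fun s hs => (hUsub ω hs).1⟩
  have hτmem : ∀ ω, τ ω ∈ U ω := fun ω => (hUclosed ω).csInf_mem (hUne ω) (hUbdd ω)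
  have hτIcc : ∀ ω, τ ω ∈ Icc 0 T := fun ω => hUsub ω (hτmem ω)
  have hτA : ∀ ω, x ≤ S ω → τ ω ∈ Icc 0 T ∩ {s | x ≤ L s ω} := by
    intro ω hω
    obtain ⟨s, hs, hxs⟩ := (hxS ω).1 hω
    set A := Icc 0 T ∩ {s | x ≤ L s ω} with hA
    have hAne : A.Nonempty := ⟨s, mem_inter hs hxs⟩
    have hAbdd : BddBelow A := ⟨0, fun r hr => hr.1.1⟩
    have hAclosed : IsClosed A := isClosed_Icc.inter (isClosed_le continuous_const (hcont ω))
    have hInfA : sInf A ∈ A := hAclosed.csInf_mem hAne hAbdd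
    have : τ ω = sInf A := by
      refine le_antisymm (csInf_le_csInf (hUbdd ω) hAne subset_union_left) ?_
      refine le_csInf (hUne ω) fun r hr => ?_
      rcases hr with h | h
      · exact csInf_le hAbdd h
      · rw [mem_singleton_iff] at h; subst h
        exact (csInf_le hAbdd (mem_inter hs hxs)).trans hs.2
    rw [this]; exact hInfA
  have hτvalx : ∀ ω, x ≤ S ω → L (τ ω) ω = x := by
    intro ω hω
    refine le_antisymm ?_ (hτA ω hω).2
    have hτpos : 0 < τ ω := by
      rcases eq_or_lt_of_le (hτIcc ω).1 with h | h
      · exfalso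
        have h3 : x ≤ L (τ ω) ω := (hτA ω hω).2
        rw [← h, h0 ω] at h3
        exact absurd h3 (not_le.2 hx)
      · exact h
    have htd : Tendsto (fun s => L s ω) (𝓝[<] (τ ω)) (𝓝 (L (τ ω) ω)) :=
      ((hcont ω).tendsto (τ ω)).mono_left nhdsWithin_le_nhds
    refine le_of_tendsto htd ?_
    filter_upwards [Ioo_mem_nhdsLT_of_mem (⟨hτpos, le_rfl⟩ : τ ω ∈ Ioc 0 (τ ω))] with s hs
    by_contra hc
    push_neg at hc
    have hsU : s ∈ U ω := Or.inl ⟨⟨hs.1.le, hs.2.le.trans (hτIcc ω).2⟩, hc.le⟩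
    exact absurd (csInf_le (hUbdd ω) hsU) (not_le.2 hs.2)
  have hτ_le_iff : ∀ ω, x ≤ S ω ↔ x ≤ L (τ ω) ω := by
    intro ω
    constructor
    · intro h; exact (hτvalx ω h).ge
    · intro h; exact (hxS ω).2 ⟨τ ω, hτIcc ω, h⟩
  have hstop : IsStoppingTime ℱ (fun ω => (τ ω : WithTop ℝ)) := by
    intro t
    simp only [WithTop.coe_le_coe]
    rcases le_or_gt T t with hTt | htT
    · have : {ω | τ ω ≤ t} = univ := eq_univ_iff_forall.2 fun ω => (hτIcc ω).2.trans hTt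
      rw [this]; exact @MeasurableSet.univ _ (ℱ t)
    · rcases lt_or_ge t 0 with ht0 | ht0
      · have : {ω | τ ω ≤ t} = ∅ :=
          eq_empty_iff_forall_notMem.2 fun ω h => absurd ((hτIcc ω).1.trans h) ht0.not_ge
        rw [this]; exact @MeasurableSet.empty _ (ℱ t)
      · have hset : {ω | τ ω ≤ t} = (fun ω => ⨆ u : Icc (0:ℝ) t, L (u : ℝ) ω) ⁻¹' Ici x := by
          ext ω
          simp only [mem_setOf_eq, mem_preimage, mem_Ici]
          rw [aux_le_ciSup_Icc_iff (hcont ω) ht0 x]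
          constructor
          · intro h
            have hA : τ ω ∈ Icc 0 T ∩ {s | x ≤ L s ω} := by
              rcases hτmem ω with hmem | hmem
              · exact hmem
              · rw [mem_singleton_iff] at hmem
                exact absurd (hmem ▸ h) htT.not_ge
            exact ⟨τ ω, ⟨(hτIcc ω).1, h⟩, hA.2⟩
          · rintro ⟨s, hs, hxs⟩
            exact (csInf_le (hUbdd ω) (Or.inl ⟨⟨hs.1, hs.2.trans htT.le⟩, hxs⟩)).trans hs.2
        rw [hset]
        have hmeas : @Measurable Ω ℝ (ℱ t) _ (fun ω => ⨆ u : Icc (0:ℝ) t, L (u : ℝ) ω) :=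
          aux_measurable_ciSup_Icc (mΩ := (ℱ t : MeasurableSpace Ω)) L hcont ht0
            (fun s hs => ((hmart.stronglyAdapted s).mono (ℱ.mono hs.2)).measurable)
        exact hmeas measurableSet_Ici
  set A : Set Ω := {ω | x ≤ S ω} with hAdef
  have hA_m0 : MeasurableSet A := hSmeas measurableSet_Ici
  have hA_τ : MeasurableSet[hstop.measurableSpace] A := by
    have : A = stoppedValue L (fun ω => (τ ω : WithTop ℝ)) ⁻¹' Ici x := by
      ext ω; exact hτ_le_iff ω
    rw [this]
    exact measurable_stoppedValue hprog hstop measurableSet_Ici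
  -- dyadic approximation from above
  set τn : ℕ → Ω → ℝ := fun n ω => min T ((⌈τ ω * 2 ^ n⌉ : ℤ) / 2 ^ n) with hτn
  have h2pos : ∀ n : ℕ, (0:ℝ) < 2 ^ n := fun n => pow_pos two_pos n
  have hτ_le_τn : ∀ n ω, τ ω ≤ τn n ω := by
    intro n ω
    refine le_min (hτIcc ω).2 ?_
    rw [le_div_iff₀ (h2pos n)]
    exact Int.le_ceil _
  have hτn_le_T : ∀ n ω, τn n ω ≤ T := fun n ω => min_le_left _ _
  have hτn_nonneg : ∀ n ω, 0 ≤ τn n ω := fun n ω => (hτIcc ω).1.trans (hτ_le_τn n ω)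
  have hτn_le : ∀ n ω, τn n ω ≤ τ ω + ((2:ℝ) ^ n)⁻¹ := by
    intro n ω
    refine (min_le_right _ _).trans ?_
    rw [div_le_iff₀ (h2pos n)]
    have h1 : ((⌈τ ω * 2 ^ n⌉ : ℤ) : ℝ) < τ ω * 2 ^ n + 1 := Int.ceil_lt_add_one _
    have h2 : (τ ω + ((2:ℝ) ^ n)⁻¹) * 2 ^ n = τ ω * 2 ^ n + 1 := by
      field_simp
    rw [h2]; exact h1.le
  have hstopn : ∀ n, IsStoppingTime ℱ (fun ω => (τn n ω : WithTop ℝ)) := by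
    intro n t
    simp only [WithTop.coe_le_coe]
    rcases le_or_gt T t with hTt | htT
    · have : {ω | τn n ω ≤ t} = univ :=
        eq_univ_iff_forall.2 fun ω => (hτn_le_T n ω).trans hTt
      rw [this]; exact @MeasurableSet.univ _ (ℱ t)
    · have hset : {ω | τn n ω ≤ t} = {ω | τ ω ≤ (⌊t * 2 ^ n⌋ : ℤ) / 2 ^ n} := by
        ext ω
        simp only [mem_setOf_eq, hτn, min_le_iff]
        constructor
        · rintro (h | h)
          · exact absurd h htT.not_ge
          · rw [div_le_iff₀ (h2pos n)] at h
            rw [le_div_iff₀ (h2pos n)]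
            have h1 : (⌈τ ω * 2 ^ n⌉ : ℤ) ≤ ⌊t * 2 ^ n⌋ := Int.le_floor.mpr h
            calc τ ω * 2 ^ n ≤ ((⌈τ ω * 2 ^ n⌉ : ℤ) : ℝ) := Int.le_ceil _
              _ ≤ ((⌊t * 2 ^ n⌋ : ℤ) : ℝ) := by exact_mod_cast h1
        · intro h
          right
          rw [le_div_iff₀ (h2pos n)] at h
          have h1 : (⌈τ ω * 2 ^ n⌉ : ℤ) ≤ ⌊t * 2 ^ n⌋ := Int.ceil_le.mpr h
          rw [div_le_iff₀ (h2pos n)]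
          calc ((⌈τ ω * 2 ^ n⌉ : ℤ) : ℝ) ≤ ((⌊t * 2 ^ n⌋ : ℤ) : ℝ) := by exact_mod_cast h1
            _ ≤ t * 2 ^ n := Int.floor_le _
      rw [hset]
      have hd : ((⌊t * 2 ^ n⌋ : ℤ) : ℝ) / 2 ^ n ≤ t := by
        rw [div_le_iff₀ (h2pos n)]; exact Int.floor_le _
      exact ℱ.mono hd _ (by simpa only [WithTop.coe_le_coe] using hstop (((⌊t * 2 ^ n⌋ : ℤ) : ℝ) / 2 ^ n))
  have hcnt : ∀ n, (Set.range (τn n)).Countable := by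
    intro n
    refine (Set.countable_range fun k : ℤ => min T ((k : ℝ) / 2 ^ n)).mono ?_
    rintro _ ⟨ω, rfl⟩
    exact ⟨⌈τ ω * 2 ^ n⌉, rfl⟩
  have hτn_bd : ∀ n, ∀ ω, τn n ω ≤ T := hτn_le_T
  have hsamp : ∀ n, stoppedValue L (fun ω => (τn n ω : WithTop ℝ)) =ᵐ[μ] μ[L T | ((hstopn n).measurableSpace)] := by
    intro n
    exact hmart.stoppedValue_ae_eq_condExp_of_le_const_of_countable_range (hstopn n)
      (fun ω => WithTop.coe_le_coe.2 (hτn_bd n ω))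
      (((hcnt n).image (fun r : ℝ => (r : WithTop ℝ))).mono (by rintro _ ⟨ω, rfl⟩; exact ⟨τn n ω, ⟨ω, rfl⟩, rfl⟩))
  have hA_τn : ∀ n, MeasurableSet[(hstopn n).measurableSpace] A := fun n =>
    (hstop.measurableSpace_mono (hstopn n) (fun ω => WithTop.coe_le_coe.2 (hτ_le_τn n ω))) _ hA_τ
  have hconst : ∀ n, ∫ ω in A, stoppedValue L (fun ω => (τn n ω : WithTop ℝ)) ω ∂μ = ∫ ω in A, L T ω ∂μ := by
    intro n
    rw [integral_congr_ae (ae_restrict_of_ae (hsamp n))]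
    exact setIntegral_condExp ((hstopn n).measurableSpace_le_of_le (fun ω => WithTop.coe_le_coe.2 (hτn_bd n ω)))
      (hmart.integrable T) (hA_τn n)
  have hτn_tendsto : ∀ ω, Tendsto (fun n => τn n ω) atTop (𝓝 (τ ω)) := by
    intro ω
    have hupper : Tendsto (fun n : ℕ => τ ω + ((2:ℝ) ^ n)⁻¹) atTop (𝓝 (τ ω)) := by
      have : Tendsto (fun n : ℕ => ((2:ℝ) ^ n)⁻¹) atTop (𝓝 0) :=
        tendsto_inv_atTop_zero.comp (tendsto_pow_atTop_atTop_of_one_lt one_lt_two)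
      simpa using tendsto_const_nhds.add this
    exact tendsto_of_tendsto_of_tendsto_of_le_of_le tendsto_const_nhds hupper
      (fun n => hτ_le_τn n ω) (fun n => hτn_le n ω)
  have hlim : Tendsto (fun n => ∫ ω in A, stoppedValue L (fun ω => (τn n ω : WithTop ℝ)) ω ∂μ) atTop
      (𝓝 (∫ ω in A, stoppedValue L (fun ω => (τ ω : WithTop ℝ)) ω ∂μ)) := by
    refine tendsto_integral_of_dominated_convergence S
      (fun n => ((measurable_stoppedValue hprog (hstopn n)).mono
        ((hstopn n).measurableSpace_le_of_le (fun ω => WithTop.coe_le_coe.2 (hτn_bd n ω))) le_rfl).aestronglyMeasurable.restrict)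
      hSint.restrict ?_ ?_
    · intro n
      refine Eventually.of_forall fun ω => ?_
      have h1 : L (τn n ω) ω ≤ S ω := by
        rw [hS ω]
        exact aux_le_ciSup_Icc (hcont ω) ⟨hτn_nonneg n ω, hτn_le_T n ω⟩
      rw [Real.norm_eq_abs]
      show |L (τn n ω) ω| ≤ S ω
      rw [abs_of_pos (hpos _ ω)]
      exact h1
    · refine Eventually.of_forall fun ω => ?_
      exact ((hcont ω).tendsto (τ ω)).comp (hτn_tendsto ω)
  have heq1 : ∫ ω in A, stoppedValue L (fun ω => (τ ω : WithTop ℝ)) ω ∂μ = ∫ ω in A, L T ω ∂μ := by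
    refine tendsto_nhds_unique hlim ?_
    simp_rw [hconst]
    exact tendsto_const_nhds
  have heq2 : ∫ ω in A, stoppedValue L (fun ω => (τ ω : WithTop ℝ)) ω ∂μ = x * (μ A).toReal := by
    have hcg : ∫ ω in A, stoppedValue L (fun ω => (τ ω : WithTop ℝ)) ω ∂μ = ∫ _ω in A, x ∂μ :=
      setIntegral_congr_fun hA_m0 (fun ω hω => hτvalx ω hω)
    rw [hcg, setIntegral_const, smul_eq_mul, mul_comm]; rfl
  rw [← heq1, heq2]

end Key

/-- **Doob's identity for the running maximum.**
If `L` is a positive continuous uniformly integrable martingale on `[0,T]` with `L 0 = 1`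
and `S` denotes its running supremum over `[0,T]`, then
`E[S] - 1 = E[L_T · log S]` and consequently `E[S] - 1 ≥ E[L_T · log L_T]`. -/
theorem max_log_identity_of_ui_martingale
    {Ω : Type*} {m0 : MeasurableSpace Ω} {μ : Measure Ω} [IsProbabilityMeasure μ]
    (ℱ : Filtration ℝ m0) (L : ℝ → Ω → ℝ) (T : ℝ) (hT : 0 ≤ T)
    (hmart : Martingale L ℱ μ)
    (hcont : ∀ ω, Continuous fun t => L t ω)
    (hpos : ∀ t ω, 0 < L t ω)
    (h0 : ∀ ω, L 0 ω = 1)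
    (hui : ∀ t, t ≤ T → L t =ᵐ[μ] μ[L T | ℱ t])
    (S : Ω → ℝ) (hS : ∀ ω, S ω = ⨆ u : Icc (0:ℝ) T, L (u : ℝ) ω)
    (hSint : Integrable S μ)
    (hint1 : Integrable (fun ω => L T ω * Real.log (S ω)) μ)
    (hint2 : Integrable (fun ω => L T ω * Real.log (L T ω)) μ) :
    (∫ ω, S ω ∂μ) - 1 = ∫ ω, L T ω * Real.log (S ω) ∂μ ∧
    ∫ ω, L T ω * Real.log (L T ω) ∂μ ≤ (∫ ω, S ω ∂μ) - 1 := by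
  have hLTmeas : Measurable (L T) := ((hmart.stronglyAdapted T).measurable).mono (ℱ.le T) le_rfl
  have hSmeas : Measurable S := by
    have : S = fun ω => ⨆ u : Icc (0:ℝ) T, L (u : ℝ) ω := funext hS
    rw [this]
    exact aux_measurable_ciSup_Icc L hcont hT
      fun s _ => ((hmart.stronglyAdapted s).measurable).mono (ℱ.le s) le_rfl
  have hS1 : ∀ ω, 1 ≤ S ω := by
    intro ω
    have h1 : L 0 ω ≤ ⨆ u : Icc (0:ℝ) T, L (u : ℝ) ω :=
      aux_le_ciSup_Icc (f := fun t => L t ω) (hcont ω) (⟨le_rfl, hT⟩ : (0:ℝ) ∈ Icc 0 T)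
    rw [h0 ω] at h1
    rw [hS ω]; exact h1
  have hSLT : ∀ ω, L T ω ≤ S ω := by
    intro ω
    have h1 : L T ω ≤ ⨆ u : Icc (0:ℝ) T, L (u : ℝ) ω :=
      aux_le_ciSup_Icc (f := fun t => L t ω) (hcont ω) (⟨hT, le_rfl⟩ : T ∈ Icc 0 T)
    rw [hS ω]; exact h1
  have key := aux_key_identity ℱ L T hT hmart hcont hpos h0 S hS hSint
  -- the integrand in the layer-cake formula
  set g : ℝ → Ω → ℝ :=
    fun t => ({ω | 1 + t ≤ S ω}).indicator (fun ω => (1 + t)⁻¹ * L T ω) with hgdef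
  have hsetmeas : ∀ t : ℝ, MeasurableSet {ω | 1 + t ≤ S ω} := fun t =>
    hSmeas measurableSet_Ici
  have hg_int : ∀ t : ℝ, Integrable (g t) μ := fun t =>
    (((hmart.integrable T).const_mul _)).indicator (hsetmeas t)
  have hg_nn : ∀ t ω, 0 ≤ t → 0 ≤ g t ω := by
    intro t ω ht
    refine Set.indicator_nonneg (fun ω' _ => mul_nonneg ?_ (hpos T ω').le) ω
    positivity
  -- step E5 : ∫⁻ ω, ofReal (g t ω) = μ {1+t ≤ S} for t > 0
  have hE5 : ∀ t : ℝ, 0 < t → (∫⁻ ω, ENNReal.ofReal (g t ω) ∂μ) = μ {ω | 1 + t ≤ S ω} := by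
    intro t ht
    have h1t : (0:ℝ) < 1 + t := by linarith
    have hreal : ∫ ω, g t ω ∂μ = (μ {ω | 1 + t ≤ S ω}).toReal := by
      rw [hgdef]
      rw [integral_indicator (hsetmeas t)]
      rw [integral_const_mul]
      rw [key (1 + t) (by linarith)]
      rw [← mul_assoc, inv_mul_cancel₀ h1t.ne', one_mul]
    rw [← ofReal_integral_eq_lintegral_ofReal (hg_int t)
      (Eventually.of_forall fun ω => hg_nn t ω ht.le), hreal,
      ENNReal.ofReal_toReal (measure_ne_top μ _)]
  -- step E7 : for every ω, ∫⁻ t in Ioi 0, ofReal (g t ω) = ofReal (L T ω * log (S ω))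
  have hE7 : ∀ ω, (∫⁻ t in Ioi (0:ℝ), ENNReal.ofReal (g t ω)) =
      ENNReal.ofReal (L T ω * Real.log (S ω)) := by
    intro ω
    set d : ℝ := S ω - 1 with hd
    have hd0 : 0 ≤ d := by have := hS1 ω; simp [hd]; linarith
    set c : ℝ := L T ω with hc
    have hsec : (fun t => g t ω) = (Iic d).indicator (fun t => (1 + t)⁻¹ * c) := by
      funext t
      rw [hgdef]
      simp only [Set.indicator_apply, mem_setOf_eq, mem_Iic]
      refine if_congr ?_ rfl rfl
      rw [hd]; constructor <;> intro <;> linarith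
    have hIntOn : IntegrableOn (fun t => (1 + t)⁻¹ * c) (Ioc 0 d) volume := by
      refine (ContinuousOn.integrableOn_Icc ?_).mono_set Ioc_subset_Icc_self
      refine ContinuousOn.mul (ContinuousOn.inv₀ (by fun_prop) ?_) continuousOn_const
      intro t htIcc
      have : (0:ℝ) < 1 + t := by have := htIcc.1; linarith
      exact this.ne'
    have hrestr : (volume.restrict (Ioi (0:ℝ))).restrict (Iic d) = volume.restrict (Ioc 0 d) := by
      rw [Measure.restrict_restrict measurableSet_Iic, Set.inter_comm, Set.Ioi_inter_Iic]
    have hsec_int : Integrable (fun t => g t ω) (volume.restrict (Ioi (0:ℝ))) := by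
      rw [hsec]
      refine IntegrableOn.integrable_indicator ?_ measurableSet_Iic
      rw [IntegrableOn, hrestr]
      exact hIntOn
    have hsec_nn : 0 ≤ᵐ[volume.restrict (Ioi (0:ℝ))] fun t => g t ω := by
      refine (ae_restrict_iff' measurableSet_Ioi).2 (Eventually.of_forall fun t ht => ?_)
      exact hg_nn t ω (le_of_lt ht)
    rw [← ofReal_integral_eq_lintegral_ofReal hsec_int hsec_nn]
    congr 1
    -- real integral computation
    have hcomp : ∫ t in Ioi (0:ℝ), g t ω = ∫ t in Ioc (0:ℝ) d, (1 + t)⁻¹ * c := by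
      rw [hsec, integral_indicator measurableSet_Iic]
      rw [show ∫ t in Iic d, (1+t)⁻¹ * c ∂(volume.restrict (Ioi (0:ℝ)))
            = ∫ t in Ioc (0:ℝ) d, (1+t)⁻¹ * c ∂volume from by rw [← hrestr]]
    rw [hcomp]
    rw [← intervalIntegral.integral_of_le hd0]
    have : ∫ t in (0:ℝ)..d, (1 + t)⁻¹ * c = (∫ t in (0:ℝ)..d, (1 + t)⁻¹) * c :=
      intervalIntegral.integral_mul_const c fun t => (1 + t)⁻¹
    rw [this]
    have hsub : ∫ t in (0:ℝ)..d, (1 + t)⁻¹ = Real.log (S ω) := by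
      have h1 : (fun t : ℝ => (1 + t)⁻¹) = fun t => (fun u : ℝ => u⁻¹) (1 + t) := rfl
      rw [h1, intervalIntegral.integral_comp_add_left (fun u : ℝ => u⁻¹) 1,
        show (1:ℝ) + 0 = 1 from by norm_num]
      rw [integral_inv (by
        rw [Set.uIcc_of_le (by linarith : (1:ℝ) ≤ 1 + d)]
        intro hmem
        exact absurd hmem.1 (by norm_num))]
      rw [div_one]
      congr 1
      rw [hd]
      ring
    rw [hsub, mul_comm]
  -- product measurability for Tonelli
  have hprod : Measurable (Function.uncurry fun ω t => ENNReal.ofReal (g t ω)) := by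
    have hgm : Measurable (fun p : Ω × ℝ => g p.2 p.1) := by
      rw [hgdef]
      have hsetp : MeasurableSet {p : Ω × ℝ | 1 + p.2 ≤ S p.1} :=
        measurableSet_le (measurable_const.add measurable_snd) (hSmeas.comp measurable_fst)
      have : (fun p : Ω × ℝ => ({ω | 1 + p.2 ≤ S ω}).indicator
          (fun ω => (1 + p.2)⁻¹ * L T ω) p.1)
          = ({p : Ω × ℝ | 1 + p.2 ≤ S p.1}).indicator
            (fun p => (1 + p.2)⁻¹ * L T p.1) := by
        funext p
        simp only [Set.indicator_apply, mem_setOf_eq]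
      rw [this]
      exact Measurable.indicator
        (((measurable_const.add measurable_snd).inv).mul (hLTmeas.comp measurable_fst)) hsetp
    exact hgm.ennreal_ofReal
  -- the layer-cake chain
  have hDint : Integrable (fun ω => S ω - 1) μ := hSint.sub (integrable_const 1)
  have hDnn : 0 ≤ᵐ[μ] fun ω => S ω - 1 :=
    Eventually.of_forall fun ω => by
      show (0:ℝ) ≤ S ω - 1
      have := hS1 ω; linarith
  have hmain : (∫ ω, S ω ∂μ) - 1 = ∫ ω, L T ω * Real.log (S ω) ∂μ := by
    have hLHS : (∫ ω, S ω ∂μ) - 1 = ∫ ω, (S ω - 1) ∂μ := by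
      rw [integral_sub hSint (integrable_const 1), integral_const, probReal_univ]
      simp
    rw [hLHS]
    rw [integral_eq_lintegral_of_nonneg_ae hDnn hDint.aestronglyMeasurable]
    rw [integral_eq_lintegral_of_nonneg_ae
      (Eventually.of_forall fun ω => mul_nonneg (hpos T ω).le (Real.log_nonneg (hS1 ω)))
      hint1.aestronglyMeasurable]
    congr 1
    rw [lintegral_eq_lintegral_meas_lt μ hDnn hDint.aemeasurable]
    have hchain1 : ∫⁻ t in Ioi (0:ℝ), μ {ω | t < S ω - 1}
        = ∫⁻ t in Ioi (0:ℝ), μ {ω | t ≤ S ω - 1} := by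
      refine lintegral_congr_ae ?_
      filter_upwards [meas_le_ae_eq_meas_lt μ (volume.restrict (Ioi (0:ℝ)))
        (fun ω => S ω - 1)] with t ht
      exact ht.symm
    rw [hchain1]
    have hchain2 : ∫⁻ t in Ioi (0:ℝ), μ {ω | t ≤ S ω - 1}
        = ∫⁻ t in Ioi (0:ℝ), ∫⁻ ω, ENNReal.ofReal (g t ω) ∂μ := by
      refine setLIntegral_congr_fun measurableSet_Ioi (fun t ht => ?_)
      have hseteq : {ω | t ≤ S ω - 1} = {ω | 1 + t ≤ S ω} := by
        ext ω; simp only [mem_setOf_eq]; constructor <;> intro <;> linarith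
      rw [hseteq, hE5 t ht]
    rw [hchain2]
    rw [← lintegral_lintegral_swap hprod.aemeasurable]
    refine lintegral_congr fun ω => ?_
    exact hE7 ω
  refine ⟨hmain, ?_⟩
  rw [hmain]
  refine integral_mono hint2 hint1 fun ω => ?_
  exact mul_le_mul_of_nonneg_left (Real.log_le_log (hpos T ω) (hSLT ω)) (hpos T ω).le
end

section
/- (Harremoës inequality) Let L be a positive continuous uniformly integrable martingale with L_0 = 1 and let x* = E[max L_T] where max L_T = sup_{0≤u≤T} L_u. Then x* - 1 - ln(x*) ≤ E[L_T ln(L_T)]. In particular, if E[L_T ln L_T] < ∞ then E[max L_T] < ∞. -/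
open MeasureTheory Filter Set Topology

noncomputable def hiDyadic (T : ℝ) (k i : ℕ) : ℝ := T * (min i (2 ^ k) : ℕ) / 2 ^ k

lemma hiDyadic_mem {T : ℝ} (hT : 0 ≤ T) (k i : ℕ) : hiDyadic T k i ∈ Icc 0 T := by
  unfold hiDyadic
  constructor
  · positivity
  · rw [div_le_iff₀ (by positivity)]
    have h1 : ((min i (2 ^ k) : ℕ) : ℝ) ≤ (2 ^ k : ℕ) := by
      exact_mod_cast Nat.cast_le.2 (min_le_right _ _)
    calc T * ((min i (2 ^ k) : ℕ) : ℝ) ≤ T * (2 ^ k : ℕ) :=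
          mul_le_mul_of_nonneg_left h1 hT
      _ = T * 2 ^ k := by push_cast; ring

lemma hiDyadic_mono {T : ℝ} (hT : 0 ≤ T) (k : ℕ) : Monotone (hiDyadic T k) := by
  intro i j hij
  unfold hiDyadic
  apply div_le_div_of_nonneg_right ?_ (by positivity)
  exact mul_le_mul_of_nonneg_left (by exact_mod_cast Nat.cast_le.2 (min_le_min_right _ hij)) hT

lemma hiDyadic_last (T : ℝ) (k : ℕ) : hiDyadic T k (2 ^ k) = T := by
  unfold hiDyadic
  rw [min_self]
  push_cast; field_simp

lemma hiDyadic_succ (T : ℝ) (k i : ℕ) : hiDyadic T k i = hiDyadic T (k + 1) (2 * i) := by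
  unfold hiDyadic
  have : min (2 * i) (2 ^ (k + 1)) = 2 * min i (2 ^ k) := by
    rw [pow_succ, mul_comm (2^k) 2, Nat.mul_min_mul_left]
  rw [this]
  push_cast
  rw [pow_succ]
  field_simp

lemma hiDyadic_dense {T : ℝ} (hT : 0 ≤ T) {u δ : ℝ} (hu : u ∈ Icc 0 T) (hδ : 0 < δ) :
    ∃ k, ∃ i ≤ 2 ^ k, |hiDyadic T k i - u| < δ := by
  rcases eq_or_lt_of_le hT with h | hTpos
  · refine ⟨0, 0, by norm_num, ?_⟩
    have hu0 : u = 0 := le_antisymm (h ▸ hu.2) hu.1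
    simp [hiDyadic, hu0, ← h, hδ]
  · obtain ⟨k, hk⟩ := pow_unbounded_of_one_lt (T / δ) (one_lt_two (α := ℝ))
    refine ⟨k, ⌊u * 2 ^ k / T⌋₊, ?_, ?_⟩
    · have : u * 2 ^ k / T ≤ 2 ^ k := by
        rw [div_le_iff₀ hTpos]
        calc u * 2 ^ k ≤ T * 2 ^ k := by gcongr; exact hu.2
          _ = 2 ^ k * T := by ring
      calc ⌊u * 2 ^ k / T⌋₊ ≤ ⌊(2:ℝ) ^ k⌋₊ := Nat.floor_le_floor this
        _ = 2 ^ k := by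
            rw [show ((2:ℝ) ^ k) = ((2 ^ k : ℕ) : ℝ) by push_cast; ring, Nat.floor_natCast]
    · have hpow : (0:ℝ) < 2 ^ k := by positivity
      have hx : 0 ≤ u * 2 ^ k / T := div_nonneg (mul_nonneg hu.1 (by positivity)) hT
      have hmin : min ⌊u * 2 ^ k / T⌋₊ (2 ^ k) = ⌊u * 2 ^ k / T⌋₊ := by
        apply min_eq_left
        have : u * 2 ^ k / T ≤ 2 ^ k := by
          rw [div_le_iff₀ hTpos]
          calc u * 2 ^ k ≤ T * 2 ^ k := by gcongr; exact hu.2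
            _ = 2 ^ k * T := by ring
        calc ⌊u * 2 ^ k / T⌋₊ ≤ ⌊(2:ℝ) ^ k⌋₊ := Nat.floor_le_floor this
          _ = 2 ^ k := by
              rw [show ((2:ℝ) ^ k) = ((2 ^ k : ℕ) : ℝ) by push_cast; ring, Nat.floor_natCast]
      unfold hiDyadic
      rw [hmin]
      have h1 : (⌊u * 2 ^ k / T⌋₊ : ℝ) ≤ u * 2 ^ k / T := Nat.floor_le hx
      have h2 : u * 2 ^ k / T < ⌊u * 2 ^ k / T⌋₊ + 1 := Nat.lt_floor_add_one _
      have hTd : T / 2 ^ k < δ := by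
        rw [div_lt_iff₀ hpow]
        calc T = (T / δ) * δ := by field_simp
          _ < 2 ^ k * δ := by gcongr
          _ = δ * 2 ^ k := mul_comm _ _
      have hle : T * (⌊u * 2 ^ k / T⌋₊ : ℝ) / 2 ^ k ≤ u := by
        rw [div_le_iff₀ hpow]
        calc T * (⌊u * 2 ^ k / T⌋₊ : ℝ) ≤ T * (u * 2 ^ k / T) := by gcongr
          _ = u * 2 ^ k := by field_simp
      have hgt : u - T / 2 ^ k < T * (⌊u * 2 ^ k / T⌋₊ : ℝ) / 2 ^ k := by
        rw [sub_lt_iff_lt_add, ← add_div, lt_div_iff₀ hpow]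
        calc u * 2 ^ k = T * (u * 2 ^ k / T) := by field_simp
          _ < T * ((⌊u * 2 ^ k / T⌋₊ : ℝ) + 1) := by gcongr
          _ = T * (⌊u * 2 ^ k / T⌋₊ : ℝ) + T := by ring
      rw [abs_lt]
      constructor <;> [linarith; linarith]

/-- **Harremoës' inequality.** For a positive continuous u.i. martingale `L` with `L 0 = 1`,
with running supremum `S` over `[0,T]` and `x* = E[S]`, one has
`x* - 1 - log x* ≤ E[L_T log L_T]`; in particular if the entropy `E[L_T log L_T]` is finite
then `E[S] < ∞`. -/
theorem harremoes_inequality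
    {Ω : Type*} {m0 : MeasurableSpace Ω} {μ : Measure Ω} [IsProbabilityMeasure μ]
    (ℱ : Filtration ℝ m0) (L : ℝ → Ω → ℝ) (T : ℝ) (hT : 0 ≤ T)
    (hmart : Martingale L ℱ μ)
    (hcont : ∀ ω, Continuous fun t => L t ω)
    (hpos : ∀ t ω, 0 < L t ω)
    (h0 : ∀ ω, L 0 ω = 1)
    (hui : ∀ t, t ≤ T → L t =ᵐ[μ] μ[L T | ℱ t])
    (S : Ω → ℝ) (hS : ∀ ω, S ω = ⨆ u : Icc (0:ℝ) T, L (u : ℝ) ω)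
    (hent : Integrable (fun ω => L T ω * Real.log (L T ω)) μ) :
    (∫⁻ ω, ENNReal.ofReal (S ω) ∂μ) ≠ ⊤ ∧
    (∫⁻ ω, ENNReal.ofReal (S ω) ∂μ).toReal - 1 -
        Real.log (∫⁻ ω, ENNReal.ofReal (S ω) ∂μ).toReal ≤
      ∫ ω, L T ω * Real.log (L T ω) ∂μ := by
  classical
  haveI : Nonempty (Icc (0:ℝ) T) := (Set.nonempty_Icc.2 hT).to_subtype
  -- basic measurability and integrability facts
  have hLmeas : ∀ t, Measurable (L t) := fun t =>
    ((hmart.stronglyAdapted t).measurable).le (ℱ.le t)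
  have hLint : Integrable (L T) μ := hmart.integrable T
  have hLT1 : ∫ ω, L T ω ∂μ = 1 := by
    calc ∫ ω, L T ω ∂μ = ∫ ω, (μ[L T | ℱ 0]) ω ∂μ := (integral_condExp (ℱ.le 0)).symm
      _ = ∫ ω, L 0 ω ∂μ := integral_congr_ae (hmart.condExp_ae_eq hT)
      _ = 1 := by simp [h0]
  -- the supremum is bounded and dominates
  have hSbdd : ∀ ω, BddAbove (Set.range fun u : Icc (0:ℝ) T => L (u:ℝ) ω) := by
    intro ω
    have h := (isCompact_Icc (a := (0:ℝ)) (b := T)).bddAbove_image (hcont ω).continuousOn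
    rwa [Set.image_eq_range] at h
  have hL_le_S : ∀ ω, ∀ t ∈ Icc (0:ℝ) T, L t ω ≤ S ω := by
    intro ω t ht
    rw [hS]
    exact le_ciSup (hSbdd ω) ⟨t, ht⟩
  have hS_one : ∀ ω, 1 ≤ S ω := by
    intro ω
    rw [← h0 ω]
    exact hL_le_S ω 0 ⟨le_rfl, hT⟩
  -- the dyadic maxima
  set M : ℕ → Ω → ℝ := fun k ω =>
    (Finset.range (2 ^ k + 1)).sup' Finset.nonempty_range_add_one
      (fun i => L (hiDyadic T k i) ω) with hM
  have hM_le_S : ∀ k ω, M k ω ≤ S ω := by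
    intro k ω
    exact Finset.sup'_le _ _ fun i _ => hL_le_S ω _ (hiDyadic_mem hT k i)
  have hM_mono : ∀ ω, Monotone fun k => M k ω := by
    intro ω
    apply monotone_nat_of_le_succ
    intro k
    apply Finset.sup'_le
    intro i hi
    rw [hiDyadic_succ T k i]
    apply Finset.le_sup' (f := fun j => L (hiDyadic T (k+1) j) ω)
    simp only [Finset.mem_range, pow_succ] at hi ⊢
    omega
  have hM_meas : ∀ k, Measurable (M k) := fun k =>
    Finset.measurable_range_sup'' fun i _ => hLmeas _
  have hone : ∀ ω (c : ℝ), (∃ u ∈ Icc (0:ℝ) T, c < L u ω) → ∃ k, c < M k ω := by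
    rintro ω c ⟨u, hu, hc⟩
    have hopen : IsOpen {t : ℝ | c < L t ω} := isOpen_lt continuous_const (hcont ω)
    obtain ⟨δ, hδ, hball⟩ := Metric.isOpen_iff.1 hopen u hc
    obtain ⟨k, i, hik, hnear⟩ := hiDyadic_dense hT hu hδ
    refine ⟨k, lt_of_lt_of_le (show c < L (hiDyadic T k i) ω from hball (by rwa [Metric.mem_ball, Real.dist_eq])) ?_⟩
    exact Finset.le_sup' (f := fun j => L (hiDyadic T k j) ω) (Finset.mem_range.2 (Nat.lt_succ_of_le hik))
  have hS_sup : ∀ ω, S ω = ⨆ k, M k ω := by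
    intro ω
    have hbddM : BddAbove (Set.range fun k => M k ω) := by
      refine ⟨S ω, ?_⟩
      rintro x ⟨k, rfl⟩
      exact hM_le_S k ω
    apply le_antisymm
    · rw [hS]
      apply ciSup_le
      intro u
      by_contra hlt
      push_neg at hlt
      obtain ⟨k, hk⟩ := hone ω _ ⟨u, u.2, hlt⟩
      exact absurd hk (not_lt.2 (le_ciSup hbddM k))
    · exact ciSup_le fun k => hM_le_S k ω
  have hSmeas : Measurable S := by
    have : S = fun ω => ⨆ k, M k ω := funext hS_sup
    rw [this]
    exact Measurable.iSup fun k => hM_meas k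
  -- Doob's maximal inequality, continuous time
  have hdoob : ∀ c : ℝ, 0 < c →
      ENNReal.ofReal c * μ {ω | c < S ω} ≤
      ENNReal.ofReal (∫ ω in {ω | c ≤ S ω}, L T ω ∂μ) := by
    intro c hc
    have hup : ∀ k : ℕ, ENNReal.ofReal c * μ {ω | c ≤ M k ω} ≤
        ENNReal.ofReal (∫ ω in {ω | c ≤ S ω}, L T ω ∂μ) := by
      intro k
      set G : Filtration ℕ m0 :=
        ⟨fun i => ℱ (hiDyadic T k i), fun i j hij => ℱ.mono (hiDyadic_mono hT k hij),
          fun i => ℱ.le _⟩ with hG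
      have hmg : Martingale (fun i => L (hiDyadic T k i)) G μ :=
        ⟨fun i => hmart.stronglyAdapted _, fun i j hij => hmart.condExp_ae_eq (hiDyadic_mono hT k hij)⟩
      have hnn : (0 : ℕ → Ω → ℝ) ≤ fun i => L (hiDyadic T k i) := by
        intro i ω
        exact (hpos _ ω).le
      have hmax := maximal_ineq hmg.submartingale hnn (ε := c.toNNReal) (2 ^ k)
      rw [Real.coe_toNNReal c hc.le] at hmax
      have hMset : {ω | c ≤
          (Finset.range (2 ^ k + 1)).sup' Finset.nonempty_range_add_one
            fun j => L (hiDyadic T k j) ω} = {ω | c ≤ M k ω} := rfl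
      rw [hMset] at hmax
      have hint : ∫ ω in {ω | c ≤ M k ω}, (fun i => L (hiDyadic T k i)) (2 ^ k) ω ∂μ =
          ∫ ω in {ω | c ≤ M k ω}, L T ω ∂μ := by
        simp only [hiDyadic_last T k]
      rw [hint] at hmax
      have hsub2 : {ω | c ≤ M k ω} ⊆ {ω | c ≤ S ω} := fun ω hω =>
        le_trans hω (hM_le_S k ω)
      have hmono2 : ∫ ω in {ω | c ≤ M k ω}, L T ω ∂μ ≤ ∫ ω in {ω | c ≤ S ω}, L T ω ∂μ :=
        setIntegral_mono_set hLint.integrableOn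
          (ae_of_all _ fun ω => (hpos T ω).le) (HasSubset.Subset.eventuallyLE hsub2)
      calc ENNReal.ofReal c * μ {ω | c ≤ M k ω}
          = c.toNNReal • μ {ω | c ≤ M k ω} := by
            rw [← ENNReal.ofNNReal_toNNReal, ENNReal.smul_def, smul_eq_mul]
        _ ≤ ENNReal.ofReal (∫ ω in {ω | c ≤ M k ω}, L T ω ∂μ) := hmax
        _ ≤ _ := ENNReal.ofReal_le_ofReal hmono2
    have hsub : {ω | c < S ω} ⊆ ⋃ k, {ω | c ≤ M k ω} := by
      intro ω hω
      rw [mem_setOf_eq, hS_sup ω] at hω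
      obtain ⟨k, hk⟩ := exists_lt_of_lt_ciSup hω
      exact mem_iUnion.2 ⟨k, hk.le⟩
    have hdirm : Monotone fun k => {ω | c ≤ M k ω} := fun k1 k2 h ω hω =>
      le_trans hω (hM_mono ω h)
    calc ENNReal.ofReal c * μ {ω | c < S ω}
        ≤ ENNReal.ofReal c * μ (⋃ k, {ω | c ≤ M k ω}) :=
          mul_le_mul_right (measure_mono hsub) _
      _ = ENNReal.ofReal c * ⨆ k, μ {ω | c ≤ M k ω} := by rw [hdirm.measure_iUnion]
      _ = ⨆ k, ENNReal.ofReal c * μ {ω | c ≤ M k ω} := by rw [ENNReal.mul_iSup]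
      _ ≤ _ := iSup_le hup
  -- truncated expectations
  set s : ℕ → Ω → ℝ := fun n ω => min (S ω) n with hsdef
  set m : ℕ → ℝ := fun n => ∫ ω, s n ω ∂μ with hmdef
  have hsint : ∀ n, Integrable (s n) μ := by
    intro n
    refine Integrable.mono' (integrable_const (n:ℝ))
      ((hSmeas.min measurable_const).aestronglyMeasurable) (ae_of_all _ fun ω => ?_)
    rw [Real.norm_eq_abs, abs_le]
    have h1 : (0:ℝ) ≤ min (S ω) n := le_min (by linarith [hS_one ω]) (Nat.cast_nonneg n)
    exact ⟨by linarith [Nat.cast_nonneg (α := ℝ) n], min_le_right _ _⟩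
  have hm_one : ∀ n : ℕ, 1 ≤ n → 1 ≤ m n := by
    intro n hn
    have hn1 : (1:ℝ) ≤ n := by exact_mod_cast hn
    calc (1:ℝ) = ∫ _, (1:ℝ) ∂μ := by simp
      _ ≤ ∫ ω, s n ω ∂μ := integral_mono (integrable_const 1) (hsint n)
          fun ω => le_min (hS_one ω) hn1
  have hs_nonneg : ∀ n (ω : Ω), 0 ≤ s n ω := fun n ω =>
    le_min (by linarith [hS_one ω]) (Nat.cast_nonneg n)
  have hA : ∀ n : ℕ, ENNReal.ofReal (m n) = ∫⁻ ω, ENNReal.ofReal (s n ω) ∂μ := fun n =>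
    ofReal_integral_eq_lintegral_ofReal (hsint n) (ae_of_all _ (hs_nonneg n))
  have hs_meas : ∀ n : ℕ, Measurable (s n) := fun n => hSmeas.min measurable_const
  have hLlogint : ∀ n : ℕ, 1 ≤ n →
      Integrable (fun ω => L T ω * Real.log (s n ω)) μ := by
    intro n hn
    have hn1 : (1:ℝ) ≤ n := by exact_mod_cast hn
    refine Integrable.mono' (hLint.mul_const (Real.log n))
      (((hLmeas T).mul ((hs_meas n).log)).aestronglyMeasurable)
      (ae_of_all _ fun ω => ?_)
    have hlog0 : 0 ≤ Real.log (s n ω) := Real.log_nonneg (le_min (hS_one ω) hn1)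
    have hlogn : Real.log (s n ω) ≤ Real.log n :=
      Real.log_le_log (lt_of_lt_of_le zero_lt_one (le_min (hS_one ω) hn1)) (min_le_right _ _)
    rw [Real.norm_eq_abs, abs_of_nonneg (mul_nonneg (hpos T ω).le hlog0)]
    exact mul_le_mul_of_nonneg_left hlogn (hpos T ω).le
  -- the key truncated inequality: m n ≤ 1 + E[L_T log s_n]
  have hkey1 : ∀ n : ℕ, 1 ≤ n →
      m n ≤ 1 + ∫ ω, L T ω * Real.log (s n ω) ∂μ := by
    intro n hn
    have hn1 : (1:ℝ) ≤ n := by exact_mod_cast hn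
    -- one-dimensional calculus fact
    have hIoc : ∀ b : ℝ, 1 ≤ b →
        ∫⁻ t in Ioc (1:ℝ) b, ENNReal.ofReal t⁻¹ = ENNReal.ofReal (Real.log b) := by
      intro b hb
      have hInt : IntegrableOn (fun t : ℝ => t⁻¹) (Ioc 1 b) volume := by
        rw [← intervalIntegrable_iff_integrableOn_Ioc_of_le hb]
        apply intervalIntegral.intervalIntegrable_inv (f := fun t : ℝ => t)
        · intro x hx
          rw [uIcc_of_le hb] at hx
          exact ne_of_gt (lt_of_lt_of_le zero_lt_one hx.1)
        · exact continuousOn_id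
      rw [← ofReal_integral_eq_lintegral_ofReal hInt
        ((ae_restrict_iff' measurableSet_Ioc).2 (ae_of_all _ fun x hx =>
          inv_nonneg.2 (by linarith [hx.1])))]
      congr 1
      rw [← intervalIntegral.integral_of_le hb, integral_inv, div_one]
      rw [uIcc_of_le hb]
      intro hmem
      linarith [hmem.1]
    have hcalc : ∀ x : ℝ, 1 ≤ x →
        ∫⁻ t in Ioo (1:ℝ) (n:ℝ), {t' : ℝ | t' ≤ x}.indicator
          (fun t => ENNReal.ofReal t⁻¹) t = ENNReal.ofReal (Real.log (min x n)) := by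
      intro x hx
      rw [show {t' : ℝ | t' ≤ x} = Iic x from rfl,
        lintegral_indicator (measurableSet_Iic (a := x)),
        Measure.restrict_restrict (measurableSet_Iic (a := x))]
      rcases lt_or_ge x n with hxn | hxn
      · have hset : Iic x ∩ Ioo (1:ℝ) n = Ioc 1 x := by
          ext t
          simp only [mem_inter_iff, mem_Iic, mem_Ioo, mem_Ioc]
          constructor
          · rintro ⟨h1, h2, h3⟩; exact ⟨h2, h1⟩
          · rintro ⟨h1, h2⟩; exact ⟨h2, h1, lt_of_le_of_lt h2 hxn⟩
        rw [hset, min_eq_left hxn.le]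
        exact hIoc x hx
      · have hset : Iic x ∩ Ioo (1:ℝ) n = Ioo (1:ℝ) (n:ℝ) := by
          apply inter_eq_self_of_subset_right
          intro t ht
          exact le_trans ht.2.le hxn
        rw [hset, min_eq_right hxn, setLIntegral_congr (Ioo_ae_eq_Ioc (a := (1:ℝ)) (b := (n:ℝ)))]
        exact hIoc n hn1
    -- the indicator kernel on the product space
    have hker_meas : Measurable fun p : ℝ × Ω =>
        ENNReal.ofReal p.1⁻¹ * ({q : ℝ × Ω | q.1 ≤ S q.2}.indicator
          (fun q => ENNReal.ofReal (L T q.2)) p) :=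
      (measurable_fst.inv.ennreal_ofReal).mul
        (Measurable.indicator (((hLmeas T).comp measurable_snd).ennreal_ofReal)
          (measurableSet_le measurable_fst (hSmeas.comp measurable_snd)))
    -- layer cake
    have hlayer : ∫⁻ ω, ENNReal.ofReal (s n ω) ∂μ
        = ∫⁻ t in Ioi (0:ℝ), μ {a | t < s n a} :=
      lintegral_eq_lintegral_meas_lt μ (ae_of_all _ (hs_nonneg n)) (hs_meas n).aemeasurable
    have hsplit : ∫⁻ t in Ioi (0:ℝ), μ {a | t < s n a}
        = (∫⁻ t in Ioc (0:ℝ) 1, μ {a | t < s n a}) + ∫⁻ t in Ioi (1:ℝ), μ {a | t < s n a} := by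
      rw [← lintegral_union measurableSet_Ioi (Ioc_disjoint_Ioi le_rfl),
        Ioc_union_Ioi_eq_Ioi zero_le_one]
    have hfirst : (∫⁻ t in Ioc (0:ℝ) 1, μ {a | t < s n a}) ≤ 1 := by
      calc ∫⁻ t in Ioc (0:ℝ) 1, μ {a | t < s n a} ≤ ∫⁻ _ in Ioc (0:ℝ) 1, 1 :=
            lintegral_mono fun t => prob_le_one
        _ = volume (Ioc (0:ℝ) 1) := setLIntegral_one _
        _ = 1 := by rw [Real.volume_Ioc]; norm_num
    have hsecond : (∫⁻ t in Ioi (1:ℝ), μ {a | t < s n a})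
        ≤ ∫⁻ t in Ioo (1:ℝ) (n:ℝ), ENNReal.ofReal t⁻¹ *
            ∫⁻ ω, {a : Ω | t ≤ S a}.indicator (fun a => ENNReal.ofReal (L T a)) ω ∂μ := by
      have hbound : ∀ t ∈ Ioi (1:ℝ), μ {a | t < s n a} ≤
          (Ioo (1:ℝ) (n:ℝ)).indicator (fun t => ENNReal.ofReal t⁻¹ *
            ∫⁻ ω, {a : Ω | t ≤ S a}.indicator (fun a => ENNReal.ofReal (L T a)) ω ∂μ) t := by
        intro t ht
        rw [mem_Ioi] at ht
        have ht0 : (0:ℝ) < t := lt_trans zero_lt_one ht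
        rcases lt_or_ge t n with htn | htn
        · have hseteq : {a | t < s n a} = {a | t < S a} := by
            ext a
            simp only [mem_setOf_eq, hsdef, lt_min_iff, htn, and_true]
          have htm : t ∈ Ioo (1:ℝ) (n:ℝ) := ⟨ht, htn⟩
          rw [hseteq, indicator_of_mem htm]
          have h1 := hdoob t ht0
          have h2 : ENNReal.ofReal (∫ ω in {a | t ≤ S a}, L T ω ∂μ) =
              ∫⁻ ω, {a : Ω | t ≤ S a}.indicator (fun a => ENNReal.ofReal (L T a)) ω ∂μ := by
            rw [lintegral_indicator (measurableSet_le measurable_const hSmeas)]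
            exact ofReal_integral_eq_lintegral_ofReal hLint.integrableOn
              (ae_of_all _ fun ω => (hpos T ω).le)
          calc μ {a | t < S a}
              = (ENNReal.ofReal t)⁻¹ * (ENNReal.ofReal t * μ {a | t < S a}) := by
                rw [← mul_assoc, ENNReal.inv_mul_cancel
                  (by simpa using ht0) ENNReal.ofReal_ne_top, one_mul]
            _ ≤ (ENNReal.ofReal t)⁻¹ * ENNReal.ofReal (∫ ω in {a | t ≤ S a}, L T ω ∂μ) :=
                mul_le_mul_right h1 _
            _ = ENNReal.ofReal t⁻¹ *
                ∫⁻ ω, {a : Ω | t ≤ S a}.indicator (fun a => ENNReal.ofReal (L T a)) ω ∂μ := by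
                rw [h2, ENNReal.ofReal_inv_of_pos ht0]
        · have hempty : {a | t < s n a} = ∅ := by
            ext a
            simp only [mem_setOf_eq, mem_empty_iff_false, iff_false, not_lt, hsdef]
            exact le_trans (min_le_right _ _) htn
          rw [hempty]
          simp
      calc ∫⁻ t in Ioi (1:ℝ), μ {a | t < s n a}
          ≤ ∫⁻ t in Ioi (1:ℝ), (Ioo (1:ℝ) (n:ℝ)).indicator (fun t => ENNReal.ofReal t⁻¹ *
              ∫⁻ ω, {a : Ω | t ≤ S a}.indicator (fun a => ENNReal.ofReal (L T a)) ω ∂μ) t := by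
            apply lintegral_mono_ae
            exact (ae_restrict_iff' measurableSet_Ioi).2 (ae_of_all _ hbound)
        _ = ∫⁻ t in Ioo (1:ℝ) (n:ℝ), ENNReal.ofReal t⁻¹ *
              ∫⁻ ω, {a : Ω | t ≤ S a}.indicator (fun a => ENNReal.ofReal (L T a)) ω ∂μ := by
            rw [lintegral_indicator measurableSet_Ioo,
              Measure.restrict_restrict measurableSet_Ioo,
              inter_eq_self_of_subset_left Ioo_subset_Ioi_self]
    -- Tonelli
    have hswap : (∫⁻ t in Ioo (1:ℝ) (n:ℝ), ENNReal.ofReal t⁻¹ *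
          ∫⁻ ω, {a : Ω | t ≤ S a}.indicator (fun a => ENNReal.ofReal (L T a)) ω ∂μ)
        = ∫⁻ ω, ENNReal.ofReal (L T ω * Real.log (s n ω)) ∂μ := by
      have hstep1 : ∀ t : ℝ, ENNReal.ofReal t⁻¹ *
          (∫⁻ ω, {a : Ω | t ≤ S a}.indicator (fun a => ENNReal.ofReal (L T a)) ω ∂μ)
          = ∫⁻ ω, ENNReal.ofReal t⁻¹ *
              {a : Ω | t ≤ S a}.indicator (fun a => ENNReal.ofReal (L T a)) ω ∂μ := fun t =>
        (lintegral_const_mul' _ _ ENNReal.ofReal_ne_top).symm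
      simp_rw [hstep1]
      rw [lintegral_lintegral_swap]
      · apply lintegral_congr
        intro ω
        have hre : ∀ t : ℝ, ENNReal.ofReal t⁻¹ *
            {a : Ω | t ≤ S a}.indicator (fun a => ENNReal.ofReal (L T a)) ω
            = {t' : ℝ | t' ≤ S ω}.indicator (fun t => ENNReal.ofReal t⁻¹) t *
              ENNReal.ofReal (L T ω) := by
          intro t
          by_cases h : t ≤ S ω <;>
            simp [Set.indicator_apply, mem_setOf_eq, h, mul_comm]
        simp_rw [hre]
        rw [lintegral_mul_const' _ _ ENNReal.ofReal_ne_top, hcalc (S ω) (hS_one ω)]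
        rw [← ENNReal.ofReal_mul (Real.log_nonneg (le_min (hS_one ω) hn1))]
        congr 1
        have : min (S ω) (n:ℝ) = s n ω := rfl
        rw [this, mul_comm]
      · have heq : (Function.uncurry fun t ω => ENNReal.ofReal t⁻¹ *
            {a : Ω | t ≤ S a}.indicator (fun a => ENNReal.ofReal (L T a)) ω)
            = fun p : ℝ × Ω => ENNReal.ofReal p.1⁻¹ *
              ({q : ℝ × Ω | q.1 ≤ S q.2}.indicator (fun q => ENNReal.ofReal (L T q.2)) p) := by
          funext p
          by_cases h : p.1 ≤ S p.2 <;>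
            simp [Function.uncurry, Set.indicator_apply, mem_setOf_eq, h]
        rw [heq]
        exact hker_meas.aemeasurable
    -- put things together in ℝ≥0∞
    have hXnn : 0 ≤ ∫ ω, L T ω * Real.log (s n ω) ∂μ :=
      integral_nonneg fun ω => mul_nonneg (hpos T ω).le (Real.log_nonneg (le_min (hS_one ω) hn1))
    have hchain : ENNReal.ofReal (m n) ≤
        ENNReal.ofReal (1 + ∫ ω, L T ω * Real.log (s n ω) ∂μ) := by
      rw [ENNReal.ofReal_add zero_le_one hXnn, ENNReal.ofReal_one]
      calc ENNReal.ofReal (m n) = ∫⁻ ω, ENNReal.ofReal (s n ω) ∂μ := hA n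
        _ = (∫⁻ t in Ioc (0:ℝ) 1, μ {a | t < s n a}) + ∫⁻ t in Ioi (1:ℝ), μ {a | t < s n a} := by
            rw [hlayer, hsplit]
        _ ≤ 1 + ∫⁻ ω, ENNReal.ofReal (L T ω * Real.log (s n ω)) ∂μ := by
            apply add_le_add hfirst
            rw [← hswap]
            exact hsecond
        _ = 1 + ENNReal.ofReal (∫ ω, L T ω * Real.log (s n ω) ∂μ) := by
            rw [← ofReal_integral_eq_lintegral_ofReal (hLlogint n hn)
              (ae_of_all _ fun ω => mul_nonneg (hpos T ω).le
                (Real.log_nonneg (le_min (hS_one ω) hn1)))]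
    exact (ENNReal.ofReal_le_ofReal_iff (by linarith)).1 hchain
  -- the Gibbs / variational step
  have hkey2 : ∀ n : ℕ, 1 ≤ n →
      (∫ ω, L T ω * Real.log (s n ω) ∂μ) ≤
        (∫ ω, L T ω * Real.log (L T ω) ∂μ) + Real.log (m n) := by
    intro n hn
    have hn1 : (1:ℝ) ≤ n := by exact_mod_cast hn
    have hmn : (1:ℝ) ≤ m n := hm_one n hn
    have hmpos : (0:ℝ) < m n := by linarith
    have hsn_pos : ∀ ω, 0 < s n ω := fun ω => lt_min (by linarith [hS_one ω]) (by linarith)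
    have hpt : ∀ ω, L T ω * Real.log (s n ω) ≤
        L T ω * Real.log (L T ω) + (s n ω / m n + L T ω * (Real.log (m n) - 1)) := by
      intro ω
      have hL := hpos T ω
      have h1 : Real.log (s n ω / (L T ω * m n)) ≤ s n ω / (L T ω * m n) - 1 :=
        Real.log_le_sub_one_of_pos (div_pos (hsn_pos ω) (mul_pos hL hmpos))
      rw [Real.log_div (ne_of_gt (hsn_pos ω)) (ne_of_gt (mul_pos hL hmpos)),
        Real.log_mul (ne_of_gt hL) (ne_of_gt hmpos)] at h1
      have h4 : L T ω * (Real.log (s n ω) - (Real.log (L T ω) + Real.log (m n))) ≤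
          s n ω / m n - L T ω := by
        calc L T ω * (Real.log (s n ω) - (Real.log (L T ω) + Real.log (m n)))
            ≤ L T ω * (s n ω / (L T ω * m n) - 1) := mul_le_mul_of_nonneg_left h1 hL.le
          _ = s n ω / m n - L T ω := by field_simp
      nlinarith [h4]
    have hint1 : Integrable (fun ω => s n ω / m n) μ := (hsint n).div_const (m n)
    have hint2 : Integrable (fun ω => L T ω * (Real.log (m n) - 1)) μ := hLint.mul_const _
    have hint3 : Integrable (fun ω => s n ω / m n + L T ω * (Real.log (m n) - 1)) μ :=
      hint1.add hint2
    have h5 := integral_mono (hLlogint n hn) (hent.add hint3) hpt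
    simp only [Pi.add_apply] at h5
    rw [integral_add hent hint3, integral_add hint1 hint2, integral_div,
      integral_mul_const, hLT1] at h5
    have hms : (∫ ω, s n ω ∂μ) = m n := rfl
    rw [hms, div_self (ne_of_gt hmpos)] at h5
    linarith
  have hkey : ∀ n : ℕ, 1 ≤ n →
      m n - 1 - Real.log (m n) ≤ ∫ ω, L T ω * Real.log (L T ω) ∂μ := by
    intro n hn
    linarith [hkey1 n hn, hkey2 n hn]
  -- identification of the total mass as a supremum
  have hsup : ∫⁻ ω, ENNReal.ofReal (S ω) ∂μ = ⨆ n, ENNReal.ofReal (m n) := by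
    have hpt : ∀ ω, ENNReal.ofReal (S ω) = ⨆ n : ℕ, ENNReal.ofReal (s n ω) := by
      intro ω
      apply le_antisymm
      · have hcl : s ⌈S ω⌉₊ ω = S ω := min_eq_left (Nat.le_ceil _)
        exact le_iSup_of_le ⌈S ω⌉₊ (le_of_eq (by rw [hcl]))
      · exact iSup_le fun n => ENNReal.ofReal_le_ofReal (min_le_left _ _)
    calc ∫⁻ ω, ENNReal.ofReal (S ω) ∂μ
        = ∫⁻ ω, ⨆ n : ℕ, ENNReal.ofReal (s n ω) ∂μ := lintegral_congr hpt
      _ = ⨆ n : ℕ, ∫⁻ ω, ENNReal.ofReal (s n ω) ∂μ :=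
          lintegral_iSup (fun n => (hs_meas n).ennreal_ofReal)
            (fun a b hab ω => ENNReal.ofReal_le_ofReal
              (min_le_min le_rfl (by exact_mod_cast hab)))
      _ = ⨆ n, ENNReal.ofReal (m n) := by
          congr 1
          funext n
          exact (hA n).symm
  have hm_mono : Monotone m := fun a b hab => integral_mono (hsint a) (hsint b)
    fun ω => min_le_min le_rfl (Nat.cast_le.2 hab)
  -- finiteness
  have hfin : (∫⁻ ω, ENNReal.ofReal (S ω) ∂μ) ≠ ⊤ := by
    intro htop
    set H := ∫ ω, L T ω * Real.log (L T ω) ∂μ with hH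
    set C := (Real.sqrt (max H 0) + 1) ^ 2 with hC
    have hC1 : (1:ℝ) ≤ C := by nlinarith [Real.sqrt_nonneg (max H 0)]
    have hex : ∃ n, C < m n := by
      by_contra hno
      push_neg at hno
      have h1 : (⨆ n, ENNReal.ofReal (m n)) ≤ ENNReal.ofReal C :=
        iSup_le fun n => ENNReal.ofReal_le_ofReal (hno n)
      rw [← hsup, htop] at h1
      exact ENNReal.ofReal_ne_top (top_le_iff.1 h1)
    obtain ⟨n, hCn⟩ := hex
    have hn1 : 1 ≤ n := by
      rcases Nat.eq_zero_or_pos n with rfl | h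
      · exfalso
        have hm0 : m 0 = 0 := by
          have : ∀ ω, s 0 ω = 0 := fun ω => by
            simp [hsdef, min_eq_right (show (0:ℝ) ≤ S ω by linarith [hS_one ω])]
          simp [hmdef, funext this]
        rw [hm0] at hCn
        linarith
      · exact h
    have hkeyn := hkey n hn1
    set x := m n with hx
    have hx1 : (1:ℝ) ≤ x := hm_one n hn1
    have hsx : Real.sqrt (max H 0) + 1 < Real.sqrt x := by
      have h1 : Real.sqrt C < Real.sqrt x := Real.sqrt_lt_sqrt (by positivity) hCn
      rwa [hC, Real.sqrt_sq (by positivity)] at h1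
    have hlog : Real.log x ≤ 2 * (Real.sqrt x - 1) := by
      have h1 : Real.log (Real.sqrt x) ≤ Real.sqrt x - 1 :=
        Real.log_le_sub_one_of_pos (Real.sqrt_pos.2 (by linarith))
      have h2 : Real.log (Real.sqrt x) = Real.log x / 2 := Real.log_sqrt (by linarith)
      linarith
    have hsq : (Real.sqrt x) ^ 2 = x := Real.sq_sqrt (by linarith)
    have hsqH : (Real.sqrt (max H 0)) ^ 2 = max H 0 := Real.sq_sqrt (le_max_right H 0)
    have hlt : max H 0 < x - 1 - Real.log x := by
      nlinarith [Real.sqrt_nonneg (max H 0), Real.sqrt_nonneg x]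
    have := le_max_left H 0
    linarith
  refine ⟨hfin, ?_⟩
  -- limit passage
  set X := (∫⁻ ω, ENNReal.ofReal (S ω) ∂μ).toReal with hX
  have hXof : ENNReal.ofReal X = ∫⁻ ω, ENNReal.ofReal (S ω) ∂μ :=
    ENNReal.ofReal_toReal hfin
  have hble : ∀ n, m n ≤ X := by
    intro n
    have h1 : ENNReal.ofReal (m n) ≤ ENNReal.ofReal X := by
      rw [hXof, hsup]
      exact le_iSup (fun n => ENNReal.ofReal (m n)) n
    exact (ENNReal.ofReal_le_ofReal_iff ENNReal.toReal_nonneg).1 h1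
  have hbdd : BddAbove (Set.range m) := ⟨X, by rintro y ⟨n, rfl⟩; exact hble n⟩
  have htend : Tendsto m atTop (𝓝 (⨆ n, m n)) := tendsto_atTop_ciSup hm_mono hbdd
  have hXr : (⨆ n, m n) = X := by
    apply le_antisymm (ciSup_le hble)
    have h1 : ENNReal.ofReal X ≤ ENNReal.ofReal (⨆ n, m n) := by
      rw [hXof, hsup]
      exact iSup_le fun n => ENNReal.ofReal_le_ofReal (le_ciSup hbdd n)
    have h2 : (1:ℝ) ≤ ⨆ n, m n := le_trans (hm_one 1 le_rfl) (le_ciSup hbdd 1)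
    exact (ENNReal.ofReal_le_ofReal_iff (by linarith)).1 h1
  rw [hXr] at htend
  have hX1 : (1:ℝ) ≤ X := le_trans (hm_one 1 le_rfl) (hble 1)
  have hφ : Tendsto (fun n => m n - 1 - Real.log (m n)) atTop
      (𝓝 (X - 1 - Real.log X)) :=
    ((htend.sub tendsto_const_nhds).sub (htend.log (by linarith)))
  exact le_of_tendsto hφ (eventually_atTop.2 ⟨1, fun n hn => hkey n hn⟩)
end

section
/- Let U be a positive càdlàg submartingale of class (D) on [0,T] with deterministic initial value U_0 and set m = E[U_T] ≥ U_0. Define u_m(x) = x - m - m ln(x). Then u_m(E[max U_T]) - u_m(U_0) ≤ E[U_T ln U_T] - E[U_T] ln(E[U_T]), where max U_T = sup_{0≤u≤T} U_u. In particular E[max U_T] is bounded by an increasing function of the Shannon entropy H(U_T) = E[U_T ln U_T] - m ln m plus u_m(U_0). -/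
open MeasureTheory Filter Set

/-! Auxiliary scalar lemmas -/

lemma scalar_log_bound {a b t : ℝ} (ha : 0 < a) (hb : 0 < b) (ht : 0 < t) :
    a * Real.log b ≤ a * Real.log a - a + t * b - a * Real.log t := by
  have h := Real.log_le_sub_one_of_pos (show 0 < t * b / a by positivity)
  rw [Real.log_div (by positivity) ha.ne', Real.log_mul ht.ne' hb.ne'] at h
  have h2 := mul_le_mul_of_nonneg_left h ha.le
  have hdiv : a * (t * b / a) = t * b := by field_simp
  nlinarith [h2]

lemma min_max_log_step {a b c : ℝ} (ha : 0 < a) (hb : 0 < b) (hc : 0 < c) :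
    min (max b a) c - min b c ≤
      a * (Real.log (min (max b a) c) - Real.log (min b c)) := by
  rcases le_total a b with h | h
  · rw [max_eq_left h]; simp
  · rw [max_eq_right h]
    have hx : 0 < min b c := lt_min hb hc
    have hxy : min b c ≤ min a c := min_le_min h le_rfl
    have hy : 0 < min a c := hx.trans_le hxy
    have hya : min a c ≤ a := min_le_left _ _
    have h1 := Real.log_le_sub_one_of_pos (show 0 < min b c / min a c by positivity)
    rw [Real.log_div hx.ne' hy.ne'] at h1
    have h2 : Real.log (min b c) ≤ Real.log (min a c) := Real.log_le_log hx hxy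
    have h3 : min b c / min a c = 1 - (min a c - min b c) / min a c := by field_simp; ring
    rw [h3] at h1
    -- (min a c - min b c)/(min a c) ≤ log (min a c) - log (min b c)
    have h4 : min a c - min b c ≤ min a c * (Real.log (min a c) - Real.log (min b c)) := by
      have := mul_le_mul_of_nonneg_left (show (min a c - min b c) / min a c ≤
        Real.log (min a c) - Real.log (min b c) by linarith) hy.le
      calc min a c - min b c = min a c * ((min a c - min b c) / min a c) := by field_simp
        _ ≤ min a c * (Real.log (min a c) - Real.log (min b c)) := this
    have h5 : min a c * (Real.log (min a c) - Real.log (min b c)) ≤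
        a * (Real.log (min a c) - Real.log (min b c)) :=
      mul_le_mul_of_nonneg_right hya (by linarith)
    linarith

lemma abs_le_of_between {a x b : ℝ} (h1 : a ≤ x) (h2 : x ≤ b) : |x| ≤ |a| + |b| := by
  rw [abs_le]
  constructor
  · have h3 := neg_abs_le a
    have h4 := abs_nonneg b
    linarith
  · have h3 := le_abs_self b
    have h4 := abs_nonneg a
    linarith

/-! Running maximum along a discrete sequence of times -/

noncomputable def runMax {Ω : Type*} (U : ℝ → Ω → ℝ) (t : ℕ → ℝ) : ℕ → Ω → ℝ
  | 0 => fun ω => U (t 0) ω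
  | n+1 => fun ω => max (runMax U t n ω) (U (t (n+1)) ω)

lemma le_runMax {Ω : Type*} (U : ℝ → Ω → ℝ) (t : ℕ → ℝ) {i n : ℕ} (h : i ≤ n) (ω : Ω) :
    U (t i) ω ≤ runMax U t n ω := by
  induction n with
  | zero =>
    have : i = 0 := Nat.le_zero.mp h
    subst this; exact le_rfl
  | succ n ih =>
    by_cases hi : i ≤ n
    · exact (ih hi).trans (le_max_left _ _)
    · have : i = n + 1 := le_antisymm h (Nat.succ_le_of_lt (not_le.mp hi))
      subst this
      exact le_max_right _ _

lemma runMax_le {Ω : Type*} (U : ℝ → Ω → ℝ) (t : ℕ → ℝ) {n : ℕ} {B : ℝ} {ω : Ω}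
    (h : ∀ i ≤ n, U (t i) ω ≤ B) : runMax U t n ω ≤ B := by
  induction n with
  | zero => exact h 0 le_rfl
  | succ n ih =>
    exact max_le (ih fun i hi => h i (hi.trans (Nat.le_succ n))) (h (n+1) le_rfl)

lemma runMax_meas {Ω : Type*} {m0 : MeasurableSpace Ω} (ℱ : Filtration ℝ m0)
    (U : ℝ → Ω → ℝ) (ha : Adapted ℱ U) {t : ℕ → ℝ} (hmono : Monotone t) (n : ℕ) :
    Measurable[ℱ (t n)] (runMax U t n) := by
  induction n with
  | zero => exact ha (t 0)
  | succ n ih =>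
    exact Measurable.max (ih.mono (ℱ.mono (hmono (Nat.le_succ n))) le_rfl)
      (ha (t (n+1)))

/-! Conditional expectation step -/

lemma integral_bdd_mul_le {Ω : Type*} {m0 : MeasurableSpace Ω} {μ : Measure Ω}
    [IsFiniteMeasure μ] {m' : MeasurableSpace Ω} (hm' : m' ≤ m0) {g X Y : Ω → ℝ} {B : ℝ}
    (hg : StronglyMeasurable[m'] g) (hg0 : ∀ ω, 0 ≤ g ω) (hgB : ∀ ω, g ω ≤ B)
    (hX : Integrable X μ) (hY : Integrable Y μ) (hle : X ≤ᵐ[μ] μ[Y|m']) :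
    ∫ ω, g ω * X ω ∂μ ≤ ∫ ω, g ω * Y ω ∂μ := by
  haveI := isFiniteMeasure_trim hm' (μ := μ)
  have hgm0 : AEStronglyMeasurable[m0] g μ := (hg.mono hm').aestronglyMeasurable
  have hgnorm : ∀ᵐ ω ∂μ, ‖g ω‖ ≤ B := .of_forall fun ω => by
    rw [Real.norm_eq_abs, abs_of_nonneg (hg0 ω)]; exact hgB ω
  have h1 : Integrable (fun ω => g ω * X ω) μ := hX.bdd_mul hgm0 hgnorm
  have h2 : Integrable (g * Y) μ := hY.bdd_mul hgm0 hgnorm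
  have h3 : Integrable (fun ω => g ω * (μ[Y|m']) ω) μ := integrable_condExp.bdd_mul hgm0 hgnorm
  have step1 : ∫ ω, g ω * X ω ∂μ ≤ ∫ ω, g ω * (μ[Y|m']) ω ∂μ := by
    refine integral_mono_ae h1 h3 ?_
    filter_upwards [hle] with ω hω
    exact mul_le_mul_of_nonneg_left hω (hg0 ω)
  have step2 : μ[g * Y|m'] =ᵐ[μ] g * μ[Y|m'] := condExp_mul_of_stronglyMeasurable_left hg h2 hY
  calc ∫ ω, g ω * X ω ∂μ ≤ ∫ ω, g ω * (μ[Y|m']) ω ∂μ := step1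
    _ = ∫ ω, (μ[g * Y|m']) ω ∂μ := (integral_congr_ae step2).symm
    _ = ∫ ω, (g * Y) ω ∂μ := integral_condExp hm'
    _ = ∫ ω, g ω * Y ω ∂μ := rfl

/-! Key discrete-time inequality -/

lemma key_discrete {Ω : Type*} {m0 : MeasurableSpace Ω} {μ : Measure Ω} [IsProbabilityMeasure μ]
    (ℱ : Filtration ℝ m0) (U : ℝ → Ω → ℝ) (hsub : Submartingale U ℱ μ)
    (hpos : ∀ s ω, 0 < U s ω) {u0 : ℝ} (hu0 : 0 < u0) (h0 : ∀ ω, U 0 ω = u0)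
    {c : ℝ} (hc : u0 ≤ c) {t : ℕ → ℝ} (ht0 : t 0 = 0) (hmono : Monotone t) (n : ℕ) :
    (∫ ω, min (runMax U t n ω) c ∂μ) - u0 ≤
      (∫ ω, Real.log (min (runMax U t n ω) c) * U (t n) ω ∂μ)
        - u0 * Real.log u0 - Real.log u0 * ((∫ ω, U (t n) ω ∂μ) - u0) := by
  have hU0 : ∀ ω, U (t 0) ω = u0 := fun ω => by rw [ht0]; exact h0 ω
  have hu0M : ∀ n ω, u0 ≤ runMax U t n ω := fun n ω => by
    have := le_runMax U t (Nat.zero_le n) ω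
    rwa [hU0 ω] at this
  have hminb : ∀ n ω, u0 ≤ min (runMax U t n ω) c := fun n ω => le_min (hu0M n ω) hc
  have hlogb : ∀ n ω, Real.log u0 ≤ Real.log (min (runMax U t n ω) c) ∧
      Real.log (min (runMax U t n ω) c) ≤ Real.log c := fun n ω =>
    ⟨Real.log_le_log hu0 (hminb n ω), Real.log_le_log (hu0.trans_le (hminb n ω)) (min_le_right _ _)⟩
  -- measurability and integrability helpers
  have hMmeas : ∀ n, Measurable[m0] (runMax U t n) := fun n =>
    (runMax_meas ℱ U hsub.stronglyAdapted.adapted hmono n).mono (ℱ.le _) le_rfl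
  have hφmeas : ∀ n, Measurable[m0] (fun ω => Real.log (min (runMax U t n ω) c)) := fun n =>
    Real.measurable_log.comp ((hMmeas n).min measurable_const)
  have hφnorm : ∀ n, ∀ᵐ ω ∂μ, ‖Real.log (min (runMax U t n ω) c)‖ ≤
      |Real.log u0| + |Real.log c| := fun n => .of_forall fun ω => by
    rcases hlogb n ω with ⟨hl, hr⟩
    rw [Real.norm_eq_abs, abs_le]
    constructor
    · have := neg_abs_le (Real.log u0); linarith [abs_nonneg (Real.log c)]
    · have := le_abs_self (Real.log c); linarith [abs_nonneg (Real.log u0)]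
  have hmin_int : ∀ n, Integrable (fun ω => min (runMax U t n ω) c) μ := fun n => by
    refine Integrable.mono' (integrable_const c) ((hMmeas n).min measurable_const).aestronglyMeasurable
      (.of_forall fun ω => ?_)
    rw [Real.norm_eq_abs, abs_of_pos (hu0.trans_le (hminb n ω))]
    exact min_le_right _ _
  have hφU_int : ∀ k n, Integrable (fun ω => Real.log (min (runMax U t k ω) c) * U (t n) ω) μ :=
    fun k n => (hsub.integrable (t n)).bdd_mul (hφmeas k).aestronglyMeasurable (hφnorm k)
  induction n with
  | zero =>
    have e1 : (∫ ω, min (runMax U t 0 ω) c ∂μ) = u0 := by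
      rw [show (fun ω => min (runMax U t 0 ω) c) = fun _ : Ω => u0 from
        funext fun ω => by simp [runMax, hU0 ω, min_eq_left hc]]
      simp
    have e2 : (∫ ω, Real.log (min (runMax U t 0 ω) c) * U (t 0) ω ∂μ) = Real.log u0 * u0 := by
      rw [show (fun ω => Real.log (min (runMax U t 0 ω) c) * U (t 0) ω)
          = fun _ : Ω => Real.log u0 * u0 from
        funext fun ω => by simp [runMax, hU0 ω, min_eq_left hc]]
      simp
    have e3 : (∫ ω, U (t 0) ω ∂μ) = u0 := by
      rw [show (fun ω => U (t 0) ω) = fun _ : Ω => u0 from funext hU0]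
      simp
    rw [e1, e2, e3]
    ring_nf
    linarith [mul_comm u0 (Real.log u0)]
  | succ n ih =>
    have hApos : ∀ ω, 0 < runMax U t n ω := fun ω => hu0.trans_le (hu0M n ω)
    have hcpos : 0 < c := hu0.trans_le hc
    -- pathwise inequality
    have hpath : ∀ ω, min (runMax U t (n+1) ω) c
        + Real.log (min (runMax U t n ω) c) * U (t (n+1)) ω
        ≤ min (runMax U t n ω) c
        + Real.log (min (runMax U t (n+1) ω) c) * U (t (n+1)) ω := by
      intro ω
      have h := min_max_log_step (a := U (t (n+1)) ω) (b := runMax U t n ω) (c := c)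
        (hpos _ ω) (hApos ω) hcpos
      have hrm : runMax U t (n+1) ω = max (runMax U t n ω) (U (t (n+1)) ω) := rfl
      rw [mul_sub] at h
      rw [hrm]
      nlinarith [h]
    have hstep1 : (∫ ω, min (runMax U t (n+1) ω) c ∂μ)
        + (∫ ω, Real.log (min (runMax U t n ω) c) * U (t (n+1)) ω ∂μ)
        ≤ (∫ ω, min (runMax U t n ω) c ∂μ)
        + (∫ ω, Real.log (min (runMax U t (n+1) ω) c) * U (t (n+1)) ω ∂μ) := by
      rw [← integral_add (hmin_int (n+1)) (hφU_int n (n+1)),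
        ← integral_add (hmin_int n) (hφU_int (n+1) (n+1))]
      exact integral_mono ((hmin_int (n+1)).add (hφU_int n (n+1)))
        ((hmin_int n).add (hφU_int (n+1) (n+1))) hpath
    -- conditional expectation step
    have hφsm : StronglyMeasurable[ℱ (t n)]
        (fun ω => Real.log (min (runMax U t n ω) c) - Real.log u0) :=
      ((Real.measurable_log.comp
        ((runMax_meas ℱ U hsub.stronglyAdapted.adapted hmono n).min measurable_const)).sub
          measurable_const).stronglyMeasurable
    have hgle : (∫ ω, (Real.log (min (runMax U t n ω) c) - Real.log u0) * U (t n) ω ∂μ)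
        ≤ ∫ ω, (Real.log (min (runMax U t n ω) c) - Real.log u0) * U (t (n+1)) ω ∂μ :=
      integral_bdd_mul_le (ℱ.le (t n)) (B := Real.log c - Real.log u0) hφsm
        (fun ω => sub_nonneg.2 (hlogb n ω).1)
        (fun ω => sub_le_sub_right (hlogb n ω).2 _)
        (hsub.integrable (t n)) (hsub.integrable (t (n+1)))
        (hsub.2.1 (t n) (t (n+1)) (hmono (Nat.le_succ n)))
    have expand : ∀ k, (∫ ω, (Real.log (min (runMax U t n ω) c) - Real.log u0) * U (t k) ω ∂μ)
        = (∫ ω, Real.log (min (runMax U t n ω) c) * U (t k) ω ∂μ)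
          - Real.log u0 * ∫ ω, U (t k) ω ∂μ := by
      intro k
      rw [← integral_const_mul, ← integral_sub (hφU_int n k)
        ((hsub.integrable (t k)).const_mul _)]
      congr 1
      funext ω
      ring
    rw [expand n, expand (n+1)] at hgle
    linarith [hstep1, hgle, ih]

/-! Boundedness of càdlàg paths on compacts -/

lemma bddAbove_image_of_cadlag (f : ℝ → ℝ) (T : ℝ)
    (hrc : ∀ t, ContinuousWithinAt f (Ici t) t)
    (hll : ∀ t, ∃ l, Tendsto f (nhdsWithin t (Iio t)) (nhds l)) :
    BddAbove (f '' Icc 0 T) := by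
  have hloc : ∀ x : ℝ, ∃ C : ℝ, ∀ᶠ s in nhds x, f s ≤ C := by
    intro x
    obtain ⟨l, hl⟩ := hll x
    have h1 : ∀ᶠ s in nhdsWithin x (Ici x), f s ≤ max (f x + 1) (l + 1) :=
      ((hrc x).eventually_lt_const (lt_add_one (f x))).mono fun s hs =>
        hs.le.trans (le_max_left _ _)
    have h2 : ∀ᶠ s in nhdsWithin x (Iio x), f s ≤ max (f x + 1) (l + 1) :=
      (hl.eventually_lt_const (lt_add_one l)).mono fun s hs =>
        hs.le.trans (le_max_right _ _)
    refine ⟨max (f x + 1) (l + 1), ?_⟩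
    have h3 : ∀ᶠ s in nhdsWithin x (Iio x) ⊔ nhdsWithin x (Ici x),
        f s ≤ max (f x + 1) (l + 1) := eventually_sup.mpr ⟨h2, h1⟩
    rwa [nhdsLT_sup_nhdsGE] at h3
  choose C hC using hloc
  have hV : ∀ x : ℝ, ∃ V : Set ℝ, (∀ s ∈ V, f s ≤ C x) ∧ IsOpen V ∧ x ∈ V := fun x =>
    eventually_nhds_iff.mp (hC x)
  choose V hVb hVo hVx using hV
  obtain ⟨tfin, -, hcover⟩ := (isCompact_Icc : IsCompact (Icc (0:ℝ) T)).elim_nhds_subcover V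
    (fun x _ => (hVo x).mem_nhds (hVx x))
  rcases tfin.eq_empty_or_nonempty with h | h
  · refine ⟨0, ?_⟩
    rintro y ⟨s, hs, rfl⟩
    have := hcover hs
    simp [h] at this
  · refine ⟨tfin.sup' h C, ?_⟩
    rintro y ⟨s, hs, rfl⟩
    obtain ⟨x, hx, hsx⟩ := mem_iUnion₂.mp (hcover hs)
    exact (hVb x s hsx).trans (Finset.le_sup' C hx)

/-! Dyadic grid -/

noncomputable def dyadic (T : ℝ) (j i : ℕ) : ℝ := i * T / 2 ^ j

/-- **Harremoës-type inequality for positive class (D) submartingales.**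
If `U` is a positive càdlàg submartingale of class (D) on `[0,T]` with deterministic initial
value `u0`, `m = E[U_T] ≥ u0` and `u_m(x) = x - m - m log x`, then
`u_m(E[max U_T]) - u_m(u0) ≤ E[U_T log U_T] - E[U_T] log (E[U_T])`. -/
theorem harremoes_inequality_submartingale
    {Ω : Type*} {m0 : MeasurableSpace Ω} {μ : Measure Ω} [IsProbabilityMeasure μ]
    (ℱ : Filtration ℝ m0) (U : ℝ → Ω → ℝ) (T : ℝ) (hT : 0 ≤ T)
    (hsub : Submartingale U ℱ μ)
    (hrc : ∀ ω t, ContinuousWithinAt (fun s => U s ω) (Ici t) t)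
    (hll : ∀ ω t, ∃ l : ℝ, Tendsto (fun s => U s ω) (nhdsWithin t (Iio t)) (nhds l))
    (hpos : ∀ t ω, 0 < U t ω)
    (u0 : ℝ) (h0 : ∀ ω, U 0 ω = u0)
    (m : ℝ) (hm : m = ∫ ω, U T ω ∂μ) (hu0m : u0 ≤ m)
    -- class (D) on `[0,T]`, expressed through integrability of the running supremum
    (S : Ω → ℝ) (hS : ∀ ω, S ω = ⨆ u : Icc (0:ℝ) T, U (u : ℝ) ω)
    (hSint : Integrable S μ)
    (hent : Integrable (fun ω => U T ω * Real.log (U T ω)) μ) :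
    ((∫ ω, S ω ∂μ) - m - m * Real.log (∫ ω, S ω ∂μ)) - (u0 - m - m * Real.log u0) ≤
      (∫ ω, U T ω * Real.log (U T ω) ∂μ) - m * Real.log m := by
  -- positivity of u0, m
  have hΩ : Nonempty Ω := by
    by_contra h
    rw [not_nonempty_iff] at h
    have h2 : (univ : Set Ω) = ∅ := Set.univ_eq_empty_iff.mpr h
    have h1 : μ univ = 0 := by rw [h2]; exact measure_empty
    rw [measure_univ] at h1
    exact one_ne_zero h1
  obtain ⟨ω0⟩ := hΩ
  haveI : Nonempty (Icc (0:ℝ) T) := ⟨⟨0, le_rfl, hT⟩⟩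
  have hu0pos : 0 < u0 := by have := hpos 0 ω0; rwa [h0 ω0] at this
  have hmpos : 0 < m := hu0pos.trans_le hu0m
  -- boundedness of paths and basic facts about S
  have hbdd : ∀ ω, BddAbove (range fun u : Icc (0:ℝ) T => U (u : ℝ) ω) := by
    intro ω
    have := bddAbove_image_of_cadlag (fun s => U s ω) T (hrc ω) (hll ω)
    rwa [image_eq_range] at this
  have hUleS : ∀ ω, ∀ s ∈ Icc (0:ℝ) T, U s ω ≤ S ω := by
    intro ω s hs
    rw [hS ω]
    exact le_ciSup (hbdd ω) ⟨s, hs⟩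
  have hUTS : ∀ ω, U T ω ≤ S ω := fun ω => hUleS ω T ⟨hT, le_rfl⟩
  have hmES : m ≤ ∫ ω, S ω ∂μ := by
    rw [hm]; exact integral_mono (hsub.integrable T) hSint hUTS
  have hESpos : 0 < ∫ ω, S ω ∂μ := hmpos.trans_le hmES
  -- dyadic grid facts
  have hd0 : ∀ j, dyadic T j 0 = 0 := fun j => by simp [dyadic]
  have hdmono : ∀ j, Monotone (dyadic T j) := by
    intro j a b hab
    have : (a : ℝ) ≤ b := Nat.cast_le.mpr hab
    unfold dyadic
    gcongr
  have hdmem : ∀ j i, i ≤ 2 ^ j → dyadic T j i ∈ Icc 0 T := by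
    intro j i hi
    have h1 : (i : ℝ) ≤ 2 ^ j := by exact_mod_cast Nat.cast_le.mpr hi
    constructor
    · unfold dyadic; positivity
    · unfold dyadic
      rw [div_le_iff₀ (by positivity)]
      nlinarith
  have hdT : ∀ j, dyadic T j (2 ^ j) = T := by
    intro j
    unfold dyadic
    push_cast
    field_simp
  -- the skeleton maxima
  have hFS : ∀ j ω, runMax U (dyadic T j) (2 ^ j) ω ≤ S ω := fun j ω =>
    runMax_le U (dyadic T j) fun i hi => hUleS ω _ (hdmem j i hi)
  have hu0F : ∀ j ω, u0 ≤ runMax U (dyadic T j) (2 ^ j) ω := by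
    intro j ω
    have := le_runMax U (dyadic T j) (Nat.zero_le (2 ^ j)) ω
    rwa [hd0 j, h0 ω] at this
  have hFmono : ∀ ω, Monotone fun j => runMax U (dyadic T j) (2 ^ j) ω := by
    intro ω
    apply monotone_nat_of_le_succ
    intro j
    apply runMax_le U (dyadic T j)
    intro i hi
    have heq : dyadic T j i = dyadic T (j+1) (2*i) := by
      unfold dyadic
      push_cast
      rw [pow_succ]
      ring
    rw [heq]
    exact le_runMax U (dyadic T (j+1))
      (by rw [pow_succ]; omega) ω
  -- convergence of the skeleton maxima to S
  have hLS : ∀ ω, Tendsto (fun j => runMax U (dyadic T j) (2 ^ j) ω) atTop (nhds (S ω)) := by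
    intro ω
    have hbddF : BddAbove (range fun j => runMax U (dyadic T j) (2 ^ j) ω) :=
      ⟨S ω, by rintro y ⟨j, rfl⟩; exact hFS j ω⟩
    have h1 := tendsto_atTop_ciSup (hFmono ω) hbddF
    have hteq : (⨆ j, runMax U (dyadic T j) (2 ^ j) ω) = S ω := by
      apply le_antisymm (ciSup_le fun j => hFS j ω)
      rw [hS ω]
      refine ciSup_le ?_
      rintro ⟨u, hu0', huT⟩
      show U u ω ≤ ⨆ j, runMax U (dyadic T j) (2 ^ j) ω
      rcases eq_or_lt_of_le huT with heq | hult
      · have h2 : U T ω ≤ runMax U (dyadic T 0) (2 ^ 0) ω := by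
          have h3 := le_runMax U (dyadic T 0) (le_refl (2 ^ 0)) ω
          rwa [hdT 0] at h3
        rw [heq]
        exact h2.trans (le_ciSup hbddF 0)
      · have hTpos : 0 < T := lt_of_le_of_lt hu0' hult
        set sq : ℕ → ℝ := fun j => dyadic T j ⌈(2:ℝ) ^ j * u / T⌉₊ with hsq
        have hk : ∀ j : ℕ, ⌈(2:ℝ) ^ j * u / T⌉₊ ≤ 2 ^ j := by
          intro j
          rw [Nat.ceil_le, div_le_iff₀ hTpos]
          push_cast
          nlinarith [pow_pos (show (0:ℝ) < 2 by norm_num) j]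
        have hsu : ∀ j, u ≤ sq j := by
          intro j
          have h4 := Nat.le_ceil ((2:ℝ) ^ j * u / T)
          rw [hsq]
          unfold dyadic
          rw [le_div_iff₀ (by positivity)]
          rw [div_le_iff₀ hTpos] at h4
          nlinarith
        have hsle : ∀ j, sq j ≤ u + T / 2 ^ j := by
          intro j
          have h4 : (⌈(2:ℝ) ^ j * u / T⌉₊ : ℝ) < 2 ^ j * u / T + 1 :=
            Nat.ceil_lt_add_one (by positivity)
          rw [hsq]
          unfold dyadic
          rw [div_le_iff₀ (show (0:ℝ) < 2 ^ j by positivity)]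
          have h5 : (⌈(2:ℝ) ^ j * u / T⌉₊ : ℝ) * T ≤ (2 ^ j * u / T + 1) * T :=
            mul_le_mul_of_nonneg_right h4.le hT
          calc (⌈(2:ℝ) ^ j * u / T⌉₊ : ℝ) * T ≤ (2 ^ j * u / T + 1) * T := h5
            _ = 2 ^ j * u + T := by field_simp
            _ = (u + T / 2 ^ j) * 2 ^ j := by field_simp
        have hT2 : Tendsto (fun j : ℕ => u + T / 2 ^ j) atTop (nhds u) := by
          have h6 : Tendsto (fun j : ℕ => T / 2 ^ j) atTop (nhds 0) := by
            simp_rw [div_eq_mul_inv, ← inv_pow]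
            have := (tendsto_pow_atTop_nhds_zero_of_lt_one
              (show (0:ℝ) ≤ 2⁻¹ by norm_num) (by norm_num)).const_mul T
            simpa using this
          have := tendsto_const_nhds (x := u) (f := atTop (α := ℕ)) |>.add h6
          simpa using this
        have hstend : Tendsto sq atTop (nhds u) :=
          tendsto_of_tendsto_of_tendsto_of_le_of_le tendsto_const_nhds hT2 hsu hsle
        have hUtend : Tendsto (fun j => U (sq j) ω) atTop (nhds (U u ω)) :=
          (hrc ω u).tendsto.comp
            (tendsto_nhdsWithin_iff.mpr ⟨hstend, .of_forall fun j => hsu j⟩)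
        refine le_of_tendsto hUtend (.of_forall fun j => ?_)
        exact (le_runMax U (dyadic T j) (hk j) ω).trans (le_ciSup hbddF j)
    rwa [hteq] at h1
  -- per-j integral bound
  have hFmeas : ∀ j, Measurable[m0] (runMax U (dyadic T j) (2 ^ j)) := fun j =>
    (runMax_meas ℱ U hsub.stronglyAdapted.adapted (hdmono j) (2 ^ j)).mono (ℱ.le _) le_rfl
  set t0 : ℝ := m / ∫ ω, S ω ∂μ with ht0
  have ht0pos : 0 < t0 := div_pos hmpos hESpos
  have hmaj_int : Integrable
      (fun ω => U T ω * Real.log (U T ω) - U T ω + t0 * S ω - U T ω * Real.log t0) μ :=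
    ((hent.sub (hsub.integrable T)).add (hSint.const_mul t0)).sub
      ((hsub.integrable T).mul_const (Real.log t0))
  have hmaj_val : (∫ ω, (U T ω * Real.log (U T ω) - U T ω + t0 * S ω
      - U T ω * Real.log t0) ∂μ)
      = (∫ ω, U T ω * Real.log (U T ω) ∂μ) - m * Real.log m
        + m * Real.log (∫ ω, S ω ∂μ) := by
    rw [integral_sub (f := fun ω => U T ω * Real.log (U T ω) - U T ω + t0 * S ω)
      (g := fun ω => U T ω * Real.log t0)
      (by exact (hent.sub (hsub.integrable T)).add (hSint.const_mul t0))
      (by exact (hsub.integrable T).mul_const (Real.log t0)),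
      integral_add (f := fun ω => U T ω * Real.log (U T ω) - U T ω) (g := fun ω => t0 * S ω)
      (by exact hent.sub (hsub.integrable T)) (by exact hSint.const_mul t0),
      integral_sub hent (hsub.integrable T), integral_const_mul, integral_mul_const, ← hm]
    have e1 : t0 * (∫ ω, S ω ∂μ) = m := by
      rw [ht0]; field_simp
    have e2 : Real.log t0 = Real.log m - Real.log (∫ ω, S ω ∂μ) := by
      rw [ht0, Real.log_div hmpos.ne' hESpos.ne']
    rw [e1, e2]
    ring
  have hkey : ∀ j : ℕ, (∫ ω, min (runMax U (dyadic T j) (2 ^ j) ω) (u0 + j) ∂μ) ≤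
      u0 + ((∫ ω, U T ω * Real.log (U T ω) ∂μ) - m * Real.log m
        + m * Real.log (∫ ω, S ω ∂μ) - m * Real.log u0) := by
    intro j
    have hcj : u0 ≤ u0 + (j : ℝ) := le_add_of_nonneg_right (Nat.cast_nonneg j)
    have h1 := key_discrete ℱ U hsub hpos hu0pos h0 hcj (hd0 j) (hdmono j) (2 ^ j)
    rw [hdT j, ← hm] at h1
    have hminpos : ∀ ω, 0 < min (runMax U (dyadic T j) (2 ^ j) ω) (u0 + j) := fun ω =>
      hu0pos.trans_le (le_min (hu0F j ω) hcj)
    have hint1 : Integrable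
        (fun ω => Real.log (min (runMax U (dyadic T j) (2 ^ j) ω) (u0 + j)) * U T ω) μ := by
      refine (hsub.integrable T).bdd_mul
        (c := |Real.log u0| + |Real.log (u0 + (j:ℝ))|)
        ((Real.measurable_log.comp ((hFmeas j).min measurable_const)).aestronglyMeasurable)
        (.of_forall fun ω => ?_)
      rw [Real.norm_eq_abs]
      exact abs_le_of_between
        (Real.log_le_log hu0pos (le_min (hu0F j ω) hcj))
        (Real.log_le_log (hminpos ω) (min_le_right _ _))
    have h2 : (∫ ω, Real.log (min (runMax U (dyadic T j) (2 ^ j) ω) (u0 + j)) * U T ω ∂μ)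
        ≤ ∫ ω, (U T ω * Real.log (U T ω) - U T ω + t0 * S ω - U T ω * Real.log t0) ∂μ := by
      refine integral_mono hint1 hmaj_int fun ω => ?_
      have e3 : Real.log (min (runMax U (dyadic T j) (2 ^ j) ω) (u0 + j))
          ≤ Real.log (S ω) :=
        Real.log_le_log (hminpos ω) ((min_le_left _ _).trans (hFS j ω))
      calc Real.log (min (runMax U (dyadic T j) (2 ^ j) ω) (u0 + j)) * U T ω
          = U T ω * Real.log (min (runMax U (dyadic T j) (2 ^ j) ω) (u0 + j)) := mul_comm _ _
        _ ≤ U T ω * Real.log (S ω) := mul_le_mul_of_nonneg_left e3 (hpos T ω).le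
        _ ≤ U T ω * Real.log (U T ω) - U T ω + t0 * S ω - U T ω * Real.log t0 :=
            scalar_log_bound (hpos T ω) ((hpos T ω).trans_le (hUTS ω)) ht0pos
    rw [hmaj_val] at h2
    linarith [h1, h2, mul_comm u0 (Real.log u0)]
  -- monotone convergence to conclude
  have hfj_int : ∀ j : ℕ,
      Integrable (fun ω => min (runMax U (dyadic T j) (2 ^ j) ω) (u0 + j)) μ := by
    intro j
    have hcj : u0 ≤ u0 + (j : ℝ) := le_add_of_nonneg_right (Nat.cast_nonneg j)
    refine Integrable.mono' (integrable_const (u0 + (j:ℝ)))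
      ((hFmeas j).min measurable_const).aestronglyMeasurable (.of_forall fun ω => ?_)
    rw [Real.norm_eq_abs, abs_of_pos (hu0pos.trans_le (le_min (hu0F j ω) hcj))]
    exact min_le_right _ _
  have hmono_j : ∀ ω, Monotone fun j : ℕ =>
      min (runMax U (dyadic T j) (2 ^ j) ω) (u0 + j) := by
    intro ω j k hjk
    refine min_le_min (hFmono ω hjk) ?_
    have : (j:ℝ) ≤ k := Nat.cast_le.mpr hjk
    linarith
  have htend : ∀ ω, Tendsto (fun j : ℕ => min (runMax U (dyadic T j) (2 ^ j) ω) (u0 + j))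
      atTop (nhds (S ω)) := by
    intro ω
    have hev : ∀ᶠ j : ℕ in atTop, S ω - u0 ≤ (j : ℝ) :=
      tendsto_natCast_atTop_atTop.eventually_ge_atTop _
    refine (hLS ω).congr' ?_
    filter_upwards [hev] with j hj
    exact (min_eq_left ((hFS j ω).trans (by linarith))).symm
  have hlim := integral_tendsto_of_tendsto_of_monotone hfj_int hSint
    (.of_forall hmono_j) (.of_forall htend)
  have hfinal : (∫ ω, S ω ∂μ) ≤ u0 + ((∫ ω, U T ω * Real.log (U T ω) ∂μ) - m * Real.log m
      + m * Real.log (∫ ω, S ω ∂μ) - m * Real.log u0) :=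
    le_of_tendsto hlim (Eventually.of_forall hkey)
  linarith [hfinal]
end

section
/- Let ξ be F_T-measurable with E[e^ξ] < ∞ and let ρ_t(ξ) = ln E[e^ξ | F_t]. Then ρ_.(ξ) is the smallest process of the form X_t = X_0 + N_t - (1/2)⟨N⟩_t (with N a continuous local martingale) satisfying X_T = ξ: for any such X with X_T = ξ and e^X of class (D) or merely e^X a local martingale, we have ρ_t(ξ) ≤ X_t a.s. for all t. -/
open MeasureTheory Filter Set
open Topology

/-- A process is a local martingale if there is a localizing sequence of stopping times
tending to infinity such that every stopped process is a martingale. -/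
def IsLocalMartingale {Ω : Type*} {m0 : MeasurableSpace Ω} (ℱ : Filtration ℝ m0)
    (μ : Measure Ω) (M : ℝ → Ω → ℝ) : Prop :=
  ∃ τ : ℕ → Ω → ℝ,
    (∀ n, IsStoppingTime ℱ (fun ω => (τ n ω : WithTop ℝ))) ∧
    (∀ ω, Monotone fun n => τ n ω) ∧
    (∀ ω, Tendsto (fun n => τ n ω) atTop atTop) ∧
    ∀ n, Martingale (MeasureTheory.stoppedProcess M (fun ω => (τ n ω : WithTop ℝ))) ℱ μ

/-- `QV` is the quadratic variation of `M`. -/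
def IsQuadraticVariationOf {Ω : Type*} {m0 : MeasurableSpace Ω} (ℱ : Filtration ℝ m0)
    (μ : Measure Ω) (M QV : ℝ → Ω → ℝ) : Prop :=
  (∀ ω, Monotone fun t => QV t ω) ∧ (∀ ω, Continuous fun t => QV t ω) ∧
    (∀ ω, QV 0 ω = 0) ∧ IsLocalMartingale ℱ μ (fun t ω => M t ω ^ 2 - QV t ω)


lemma condexp_pos_of_pos {Ω : Type*} {m0 : MeasurableSpace Ω} {μ : Measure Ω}
    [IsProbabilityMeasure μ] {m : MeasurableSpace Ω} (hm : m ≤ m0)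
    {f : Ω → ℝ} (hf : Integrable f μ) (hpos : ∀ ω, 0 < f ω) :
    ∀ᵐ ω ∂μ, 0 < (μ[f|m]) ω := by
  set F := μ[f|m] with hF
  have hFnn : 0 ≤ᵐ[μ] F := condExp_nonneg (Eventually.of_forall fun ω => (hpos ω).le)
  have hAm : MeasurableSet[m] (F ⁻¹' Iic 0) :=
    stronglyMeasurable_condExp.measurable measurableSet_Iic
  set A : Set Ω := F ⁻¹' Iic 0 with hA
  have h1 : ∫ ω in A, f ω ∂μ = ∫ ω in A, F ω ∂μ := (setIntegral_condExp hm hf hAm).symm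
  have h2 : ∫ ω in A, F ω ∂μ ≤ 0 := by
    refine integral_nonpos_of_ae ?_
    exact (ae_restrict_iff' (hm _ hAm)).2 (Eventually.of_forall fun ω hω => hω)
  have h3 : 0 ≤ ∫ ω in A, f ω ∂μ := integral_nonneg fun ω => (hpos ω).le
  have h4 : ∫ ω in A, f ω ∂μ = 0 := le_antisymm (h1 ▸ h2) h3
  have h5 : f =ᵐ[μ.restrict A] 0 :=
    (integral_eq_zero_iff_of_nonneg (fun ω => (hpos ω).le) hf.restrict).1 h4
  have h6 : μ A = 0 := by
    have : (μ.restrict A) {ω | f ω ≠ 0} = 0 := h5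
    have huniv : {ω | f ω ≠ 0} = univ := eq_univ_of_forall fun ω => (hpos ω).ne'
    rw [huniv] at this
    simpa [Measure.restrict_apply_univ] using this
  have : ∀ᵐ ω ∂μ, ω ∉ A := by
    rw [ae_iff]; simpa using h6
  filter_upwards [this] with ω hω
  simpa [A, not_le] using hω

/-- **Minimality of the entropic process.** If `ξ ∈ L¹_exp` and
`X = X₀ + N - (1/2)⟨N⟩` is a `q`-semimartingale with `X_T = ξ` and `exp X` a local
martingale, then `ρ_t(ξ) = log E[exp ξ | F_t] ≤ X_t` a.s. for every `t ≤ T`. -/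
theorem entropic_process_minimal
    {Ω : Type*} {m0 : MeasurableSpace Ω} {μ : Measure Ω} [IsProbabilityMeasure μ]
    (ℱ : Filtration ℝ m0) (T : ℝ) (hT : 0 ≤ T) (ξ : Ω → ℝ)
    (hint : Integrable (fun ω => Real.exp (ξ ω)) μ)
    (X N QV : ℝ → Ω → ℝ)
    (hN : IsLocalMartingale ℱ μ N) (hNc : ∀ ω, Continuous fun t => N t ω)
    (hN0 : ∀ ω, N 0 ω = 0)
    (hQV : IsQuadraticVariationOf ℱ μ N QV)
    (hX : ∀ t ω, X t ω = X 0 ω + N t ω - QV t ω / 2)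
    (hXT : (fun ω => X T ω) =ᵐ[μ] ξ)
    (hexp : IsLocalMartingale ℱ μ (fun t ω => Real.exp (X t ω))) :
    ∀ t, t ≤ T →
      (fun ω => Real.log ((μ[fun ω' => Real.exp (ξ ω') | ℱ t]) ω)) ≤ᵐ[μ] X t := by
  intro t ht
  obtain ⟨τ, hτstop, hτmono, hτtop, hτmart⟩ := hexp
  have hmle : ℱ t ≤ m0 := ℱ.le t
  set M : ℝ → Ω → ℝ := fun s ω => Real.exp (X s ω) with hM
  set f : ℕ → ℝ → Ω → ℝ := fun n => MeasureTheory.stoppedProcess M (fun ω => (τ n ω : WithTop ℝ)) with hfdef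
  have hfpos : ∀ n s ω, 0 < f n s ω := fun n s ω => Real.exp_pos _
  set h : Ω → ℝ := fun ω => Real.exp (X T ω) with hh
  have hheq : h =ᵐ[μ] fun ω => Real.exp (ξ ω) := hXT.mono fun ω hω => by simp [h, hω]
  have hhint : Integrable h μ := hint.congr hheq.symm
  -- stopped values equal unstopped values for large n
  have hstop : ∀ (s : ℝ) n ω, s ≤ τ n ω → f n s ω = M s ω := by
    intro s n ω hs
    simp only [f, MeasureTheory.stoppedProcess]
    rw [min_eq_left (WithTop.coe_le_coe.2 hs)]
    simp
  -- integrability and measurability of stopped processes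
  have hfint : ∀ n s, Integrable (f n s) μ := fun n s => (hτmart n).integrable s
  have hfmeas : ∀ n s, Measurable (f n s) := fun n s =>
    (((hτmart n).stronglyAdapted s).mono (ℱ.le s)).measurable
  -- the approximating sequence H n = inf_{k} f (n+k) T
  set H : ℕ → Ω → ℝ := fun n ω => ⨅ k : ℕ, f (n + k) T ω with hHdef
  have hbdd : ∀ n ω, BddBelow (range fun k : ℕ => f (n + k) T ω) := by
    intro n ω
    exact ⟨0, by rintro x ⟨k, rfl⟩; exact (hfpos _ _ _).le⟩
  have hHle : ∀ n k ω, H n ω ≤ f (n + k) T ω := fun n k ω => ciInf_le (hbdd n ω) k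
  have hHnn : ∀ n ω, 0 ≤ H n ω := fun n ω => le_ciInf fun k => (hfpos _ _ _).le
  have hKT : ∀ ω, ∃ K, ∀ k ≥ K, f k T ω = h ω := by
    intro ω
    obtain ⟨K, hK⟩ := ((hτtop ω).eventually_ge_atTop T).exists_forall_of_atTop
    exact ⟨K, fun k hk => hstop T k ω (hK k hk)⟩
  have hHleh : ∀ n ω, H n ω ≤ h ω := by
    intro n ω
    obtain ⟨K, hK⟩ := hKT ω
    calc H n ω ≤ f (n + K) T ω := hHle n K ω
    _ = h ω := hK _ (le_add_self)
  have hHtend : ∀ ω, Tendsto (fun n => H n ω) atTop (𝓝 (h ω)) := by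
    intro ω
    obtain ⟨K, hK⟩ := hKT ω
    have : ∀ n ≥ K, H n ω = h ω := by
      intro n hn
      have : ∀ k : ℕ, f (n + k) T ω = h ω := fun k => hK _ (le_trans hn (Nat.le_add_right n k))
      simp [H, this, ciInf_const]
    exact Tendsto.congr' (eventually_atTop.2 ⟨K, fun n hn => (this n hn).symm⟩) tendsto_const_nhds
  have hHmeas : ∀ n, Measurable (H n) := fun n => Measurable.iInf fun k => hfmeas (n + k) T
  have hHint : ∀ n, Integrable (H n) μ := by
    intro n
    refine (hfint n T).mono' (hHmeas n).aestronglyMeasurable ?_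
    refine Eventually.of_forall fun ω => ?_
    rw [Real.norm_eq_abs, abs_of_nonneg (hHnn n ω)]
    simpa using hHle n 0 ω
  -- integrals converge
  have hIntTend : Tendsto (fun n => ∫ ω, H n ω ∂μ) atTop (𝓝 (∫ ω, h ω ∂μ)) := by
    refine tendsto_integral_of_dominated_convergence h
      (fun n => (hHmeas n).aestronglyMeasurable) hhint ?_ ?_
    · intro n
      refine Eventually.of_forall fun ω => ?_
      rw [Real.norm_eq_abs, abs_of_nonneg (hHnn n ω)]
      exact hHleh n ω
    · exact Eventually.of_forall hHtend
  -- the defect d n and its infimum D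
  set d : ℕ → Ω → ℝ := fun n ω => (μ[h|ℱ t]) ω - (μ[H n|ℱ t]) ω with hddef
  have hdnn : ∀ n, 0 ≤ᵐ[μ] d n := by
    intro n
    have := condExp_mono (hHint n) hhint (Eventually.of_forall fun ω => hHleh n ω) (m := ℱ t)
    filter_upwards [this] with ω hω
    simpa [d] using hω
  have hdint : ∀ n, Integrable (d n) μ := fun n => integrable_condExp.sub integrable_condExp
  have hdInt : ∀ n, ∫ ω, d n ω ∂μ = ∫ ω, h ω ∂μ - ∫ ω, H n ω ∂μ := by
    intro n
    rw [hddef]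
    rw [integral_sub integrable_condExp integrable_condExp, integral_condExp hmle,
      integral_condExp hmle]
  have hdIntTend : Tendsto (fun n => ∫ ω, d n ω ∂μ) atTop (𝓝 0) := by
    simp only [hdInt]
    simpa using (tendsto_const_nhds (x := ∫ ω, h ω ∂μ)).sub hIntTend
  have hdmeas : ∀ n, Measurable (d n) := fun n =>
    ((stronglyMeasurable_condExp.mono hmle).measurable).sub
      ((stronglyMeasurable_condExp.mono hmle).measurable)
  set D : Ω → ℝ := fun ω => ⨅ n : ℕ, d n ω with hDdef
  have hDmeas : Measurable D := Measurable.iInf fun n => hdmeas n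
  have hdnn' : ∀ᵐ ω ∂μ, ∀ n, 0 ≤ d n ω := ae_all_iff.2 hdnn
  have hDbdd : ∀ ω, (∀ n, 0 ≤ d n ω) → BddBelow (range fun n : ℕ => d n ω) := by
    intro ω hω
    exact ⟨0, by rintro x ⟨n, rfl⟩; exact hω n⟩
  have hDled : ∀ᵐ ω ∂μ, ∀ n, D ω ≤ d n ω := by
    filter_upwards [hdnn'] with ω hω n
    exact ciInf_le (hDbdd ω hω) n
  have hDnn : ∀ᵐ ω ∂μ, 0 ≤ D ω := by
    filter_upwards [hdnn'] with ω hω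
    exact le_ciInf hω
  have hDint : Integrable D μ := by
    refine (hdint 0).mono' hDmeas.aestronglyMeasurable ?_
    filter_upwards [hDled, hDnn] with ω h1 h2
    rw [Real.norm_eq_abs, abs_of_nonneg h2]
    exact h1 0
  have hDInt0 : ∫ ω, D ω ∂μ = 0 := by
    have hle : ∀ n, ∫ ω, D ω ∂μ ≤ ∫ ω, d n ω ∂μ := by
      intro n
      refine integral_mono_ae hDint (hdint n) ?_
      filter_upwards [hDled] with ω hω using hω n
    have h1 : ∫ ω, D ω ∂μ ≤ 0 :=
      ge_of_tendsto hdIntTend (Eventually.of_forall hle)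
    have h2 : 0 ≤ ∫ ω, D ω ∂μ := integral_nonneg_of_ae hDnn
    linarith
  have hD0 : D =ᵐ[μ] 0 := (integral_eq_zero_iff_of_nonneg_ae hDnn hDint).1 hDInt0
  -- condexp of H n is bounded by exp (X t)
  have hHcond : ∀ n, ∀ᵐ ω ∂μ, (μ[H n|ℱ t]) ω ≤ M t ω := by
    intro n
    have hk : ∀ k : ℕ, (μ[H n|ℱ t]) ≤ᵐ[μ] f (n + k) t := by
      intro k
      have h1 : μ[H n|ℱ t] ≤ᵐ[μ] μ[f (n + k) T|ℱ t] :=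
        condExp_mono (hHint n) (hfint (n + k) T) (Eventually.of_forall fun ω => hHle n k ω)
      exact h1.trans ((hτmart (n + k)).condExp_ae_eq ht).le
    have hk' : ∀ᵐ ω ∂μ, ∀ k : ℕ, (μ[H n|ℱ t]) ω ≤ f (n + k) t ω := ae_all_iff.2 hk
    filter_upwards [hk'] with ω hω
    obtain ⟨k, hτk⟩ := ((hτtop ω).eventually_ge_atTop t).exists_forall_of_atTop
    have := hω k
    rwa [hstop t (n + k) ω (hτk (n + k) le_add_self)] at this
  have hHcond' : ∀ᵐ ω ∂μ, ∀ n, (μ[H n|ℱ t]) ω ≤ M t ω := ae_all_iff.2 hHcond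
  -- putting it together : μ[h | ℱ t] ≤ M t a.e.
  have hmain : ∀ᵐ ω ∂μ, (μ[h|ℱ t]) ω ≤ M t ω := by
    filter_upwards [hHcond', hD0, hdnn'] with ω h1 h2 h3
    have key : (μ[h|ℱ t]) ω - M t ω ≤ D ω := by
      refine le_ciInf fun n => ?_
      have : (μ[h|ℱ t]) ω = (μ[H n|ℱ t]) ω + d n ω := by simp [d]
      rw [this]
      have := h1 n
      linarith
    have : D ω = 0 := h2
    linarith [key, this.le]
  -- positivity of the conditional expectation
  have hFpos : ∀ᵐ ω ∂μ, 0 < (μ[fun ω' => Real.exp (ξ ω')|ℱ t]) ω :=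
    condexp_pos_of_pos hmle hint fun ω => Real.exp_pos _
  have hcongr : (μ[fun ω' => Real.exp (ξ ω')|ℱ t]) =ᵐ[μ] μ[h|ℱ t] :=
    condExp_congr_ae hheq.symm
  filter_upwards [hmain, hFpos, hcongr] with ω h1 h2 h3
  have hle : (μ[fun ω' => Real.exp (ξ ω')|ℱ t]) ω ≤ Real.exp (X t ω) := by
    rw [h3]; exact h1
  exact (Real.log_le_iff_le_exp h2).2 hle
end
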